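/- Let (X,G,m) be a dynamical system over a σ-compact locally compact abelian group G and (B_n) a Følner sequence in G. Then the set Bap(X,G,m) of points of X that are Besicovitch almost periodic and generic for m along (B_n) is a Borel measurable, G-invariant subset of X. -/

import Mathlib

open MeasureTheory Filter Topology Set Pointwise

noncomputable section
set_option linter.unusedSectionVars false

namespace APPaper

/-- A subset `A` of `G` is relatively dense if there is a compact `K ⊆ G` with
`G = ⋃_{a ∈ A} (a + K)`. -/
def RelDense {G : Type*} [AddCommGroup G] [TopologicalSpace G] (A : Set G) : Prop :=
  ∃ K : Set G, IsCompact K ∧ ∀ g : G, ∃ a ∈ A, g - a ∈ K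

/-- A continuous character of `G`, i.e. a continuous homomorphism into the unit circle
(realized inside `ℂ`). -/
def IsChar {G : Type*} [AddCommGroup G] [TopologicalSpace G] (ξ : G → ℂ) : Prop :=
  Continuous ξ ∧ (∀ t, ‖ξ t‖ = 1) ∧ ∀ s t, ξ (s + t) = ξ s * ξ t

/-- `B` is a Følner sequence (of open, relatively compact, nonempty sets) for the
measure `μ` on `G`. -/
structure IsFolner {G : Type*} [AddCommGroup G] [TopologicalSpace G] [MeasurableSpace G]
    (μ : Measure G) (B : ℕ → Set G) : Prop where
  isOpen : ∀ n, IsOpen (B n)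
  nonempty : ∀ n, (B n).Nonempty
  relCompact : ∀ n, IsCompact (closure (B n))
  folner : ∀ t : G,
    Tendsto (fun n => (μ ((B n \ (t +ᵥ B n)) ∪ ((t +ᵥ B n) \ B n))).toReal / (μ (B n)).toReal)
      atTop (𝓝 0)

/-- The average `(1/|B n|) ∫_{B n} h` of a real valued function. -/
def avg {G : Type*} [MeasurableSpace G] (μ : Measure G) (B : ℕ → Set G) (n : ℕ)
    (h : G → ℝ) : ℝ :=
  (μ (B n)).toReal⁻¹ * ∫ t in B n, h t ∂μ

/-- The average `(1/|B n|) ∫_{B n} h` of a complex valued function. -/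
def avgC {G : Type*} [MeasurableSpace G] (μ : Measure G) (B : ℕ → Set G) (n : ℕ)
    (h : G → ℂ) : ℂ :=
  (μ (B n)).toReal⁻¹ • ∫ t in B n, h t ∂μ

/-- The upper mean `M̄(h) = limsup_n (1/|B n|) ∫_{B n} h` along the Følner sequence. -/
def upperMean {G : Type*} [MeasurableSpace G] (μ : Measure G) (B : ℕ → Set G) (h : G → ℝ) : ℝ :=
  Filter.limsup (fun n => avg μ B n h) Filter.atTop

/-- The upper density `Dens(A) = M̄(1_A)` of a subset of `G`. -/
def upperDens {G : Type*} [MeasurableSpace G] (μ : Measure G) (B : ℕ → Set G) (A : Set G) : ℝ :=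
  upperMean μ B (A.indicator fun _ => (1 : ℝ))

/-- `M̄_n(h) = sup_{r ∈ G} (1/|B n|) ∫_{B n + r} h`. -/
def supAvg {G : Type*} [AddCommGroup G] [MeasurableSpace G] (μ : Measure G) (B : ℕ → Set G)
    (n : ℕ) (h : G → ℝ) : ℝ :=
  ⨆ r : G, (μ (B n)).toReal⁻¹ * ∫ t in (r +ᵥ B n), h t ∂μ

/-- A function `f : G → E` is mean almost periodic (w.r.t. `(B n)`) if for each `ε > 0` the set
of `t` with `M̄(‖f - f(· - t)‖) < ε` is relatively dense. -/
def MeanAPFun {G : Type*} [AddCommGroup G] [TopologicalSpace G] [MeasurableSpace G]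
    (μ : Measure G) (B : ℕ → Set G) {E : Type*} [NormedAddCommGroup E] (f : G → E) : Prop :=
  ∀ ε : ℝ, 0 < ε → RelDense {t : G | upperMean μ B (fun s => ‖f s - f (s - t)‖) < ε}

/-- A function `f : G → ℂ` is Besicovitch almost periodic (w.r.t. `(B n)`) if it can be
approximated, in the seminorm `M̄(|·|)`, by finite linear combinations of continuous
characters. -/
def BesicovitchAPFun {G : Type*} [AddCommGroup G] [TopologicalSpace G] [MeasurableSpace G]
    (μ : Measure G) (B : ℕ → Set G) (f : G → ℂ) : Prop :=
  ∀ ε : ℝ, 0 < ε → ∃ (k : ℕ) (ξ : Fin k → G → ℂ) (c : Fin k → ℂ),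
    (∀ j, IsChar (ξ j)) ∧ upperMean μ B (fun s => ‖f s - ∑ j, c j * ξ j s‖) < ε

/-- A function `f : G → E` is Bohr almost periodic if for every `ε > 0` the set of `t` with
`‖f - f(· - t)‖_∞ < ε` is relatively dense. -/
def BohrAPFun {G : Type*} [AddCommGroup G] [TopologicalSpace G] {E : Type*}
    [NormedAddCommGroup E] (f : G → E) : Prop :=
  ∀ ε : ℝ, 0 < ε → RelDense {t : G | (⨆ s : G, ‖f s - f (s - t)‖) < ε}

/-- The orbit `{t +ᵥ x : t ∈ G}` of a point. -/
def orbitSet (G : Type*) {X : Type*} [AddCommGroup G] [AddAction G X] (x : X) : Set X :=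
  Set.range fun t : G => t +ᵥ x

/-- The averaged pseudometric `D(x,y) = M̄(s ↦ dist(s x, s y))`. -/
def avgDist {G : Type*} [AddCommGroup G] [MeasurableSpace G] {X : Type*} [PseudoMetricSpace X]
    [AddAction G X] (μ : Measure G) (B : ℕ → Set G) (x y : X) : ℝ :=
  upperMean μ B fun s => dist (s +ᵥ x) (s +ᵥ y)

/-- A point `x` is mean almost periodic (w.r.t. the metric of `X` and `(B n)`) if for every
`ε > 0` the set `{t : D(x, t x) < ε}` is relatively dense. -/
def MeanAPPoint {G : Type*} [AddCommGroup G] [TopologicalSpace G] [MeasurableSpace G]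
    {X : Type*} [PseudoMetricSpace X] [AddAction G X] (μ : Measure G) (B : ℕ → Set G)
    (x : X) : Prop :=
  ∀ ε : ℝ, 0 < ε → RelDense {t : G | avgDist μ B x (t +ᵥ x) < ε}

/-- Mean almost periodicity of a point with respect to an abstract metric `d` on `X`. -/
def MeanAPPointWith {G : Type*} [AddCommGroup G] [TopologicalSpace G] [MeasurableSpace G]
    {X : Type*} [AddAction G X] (μ : Measure G) (B : ℕ → Set G) (d : X → X → ℝ)
    (x : X) : Prop :=
  ∀ ε : ℝ, 0 < ε → RelDense {t : G | upperMean μ B (fun s => d (s +ᵥ x) (s +ᵥ (t +ᵥ x))) < ε}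

/-- A point `x` is Besicovitch almost periodic if `t ↦ f (t +ᵥ x)` is a Besicovitch almost
periodic function for every continuous `f : X → ℂ`. -/
def BesicovitchAPPoint {G : Type*} [AddCommGroup G] [TopologicalSpace G] [MeasurableSpace G]
    {X : Type*} [TopologicalSpace X] [AddAction G X] (μ : Measure G) (B : ℕ → Set G)
    (x : X) : Prop :=
  ∀ f : C(X, ℂ), BesicovitchAPFun μ B fun t : G => f (t +ᵥ x)

/-- The averaged pseudometric `D_n(x,y) = M̄_n(s ↦ dist(s x, s y))` at level `n`. -/
def weylDist {G : Type*} [AddCommGroup G] [MeasurableSpace G] {X : Type*} [PseudoMetricSpace X]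
    [AddAction G X] (μ : Measure G) (B : ℕ → Set G) (n : ℕ) (x y : X) : ℝ :=
  supAvg μ B n fun s => dist (s +ᵥ x) (s +ᵥ y)

/-- A point `x` is Weyl almost periodic if for every `ε > 0` there is an `N` such that
`{t : D_N(x, t x) < ε}` is relatively dense. -/
def WeylAPPoint {G : Type*} [AddCommGroup G] [TopologicalSpace G] [MeasurableSpace G]
    {X : Type*} [PseudoMetricSpace X] [AddAction G X] (μ : Measure G) (B : ℕ → Set G)
    (x : X) : Prop :=
  ∀ ε : ℝ, 0 < ε → ∃ N : ℕ, RelDense {t : G | weylDist μ B N x (t +ᵥ x) < ε}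

/-- A point `y` is generic for the measure `m` along `(B n)`. -/
def IsGeneric {G : Type*} [AddCommGroup G] [MeasurableSpace G] {X : Type*}
    [TopologicalSpace X] [MeasurableSpace X] [AddAction G X] (μ : Measure G) (B : ℕ → Set G)
    (m : Measure X) (y : X) : Prop :=
  ∀ f : C(X, ℂ),
    Tendsto (fun n => avgC μ B n fun t => f (t +ᵥ y)) atTop (𝓝 (∫ z, f z ∂m))

/-- The measure `m` is invariant under the action of `G`. -/
def InvariantMeasure (G : Type*) [AddCommGroup G] {X : Type*} [MeasurableSpace X]
    [AddAction G X] (m : Measure X) : Prop :=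
  ∀ t : G, MeasurePreserving (fun x : X => t +ᵥ x) m m

/-- The measure `m` is ergodic for the action of `G`. -/
def ErgodicMeasure (G : Type*) [AddCommGroup G] {X : Type*} [MeasurableSpace X]
    [AddAction G X] (m : Measure X) : Prop :=
  ∀ A : Set X, MeasurableSet A → (∀ t : G, (fun x : X => t +ᵥ x) ⁻¹' A = A) →
    m A = 0 ∨ m A = 1

/-- `f` is an eigenfunction of `(X,G,m)` with eigenvalue the continuous character `ξ`. -/
def IsEigenfunctionWith {G : Type*} [AddCommGroup G] [TopologicalSpace G] {X : Type*}
    [MeasurableSpace X] [AddAction G X] (m : Measure X) (ξ : G → ℂ) (f : X → ℂ) : Prop :=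
  IsChar ξ ∧ MemLp f 2 m ∧ ¬ f =ᵐ[m] (fun _ => (0 : ℂ)) ∧
    ∀ t : G, (fun x => f (t +ᵥ x)) =ᵐ[m] fun x => ξ t * f x

/-- The set of eigenvalues of `(X,G,m)`. -/
def Eig (G : Type*) [AddCommGroup G] [TopologicalSpace G] {X : Type*} [MeasurableSpace X]
    [AddAction G X] (m : Measure X) : Set (G → ℂ) :=
  {ξ | ∃ f : X → ℂ, IsEigenfunctionWith m ξ f}

/-- `(X,G,m)` has pure point spectrum: `L²(X,m)` possesses an orthonormal (Hilbert) basis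
consisting of eigenfunctions. -/
def PurePointSpectrum (G : Type*) [AddCommGroup G] [TopologicalSpace G] {X : Type*}
    [MeasurableSpace X] [AddAction G X] (m : Measure X) : Prop :=
  ∃ (ι : Type) (b : HilbertBasis ι ℂ (Lp ℂ 2 m)), ∀ i : ι,
    ∃ (ξ : G → ℂ) (f : X → ℂ) (hf : MemLp f 2 m),
      IsEigenfunctionWith m ξ f ∧ b i = hf.toLp f

/-- Every eigenvalue of `(X,G,m)` admits a continuous eigenfunction. -/
def ContinuousEigenfunctions (G : Type*) [AddCommGroup G] [TopologicalSpace G] {X : Type*}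
    [TopologicalSpace X] [MeasurableSpace X] [AddAction G X] (m : Measure X) : Prop :=
  ∀ ξ ∈ Eig G m, ∃ f : X → ℂ, Continuous f ∧ IsEigenfunctionWith m ξ f

/-- The set of frequencies of a point `x`: those continuous characters `ξ` for which the
average `A((t ↦ f(t +ᵥ x)) ⋅ conj ξ)` exists and is nonzero for some `f ∈ C(X)`. -/
def Freq {G : Type*} [AddCommGroup G] [TopologicalSpace G] [MeasurableSpace G] {X : Type*}
    [TopologicalSpace X] [AddAction G X] (μ : Measure G) (B : ℕ → Set G) (x : X) :
    Set (G → ℂ) :=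
  {ξ | IsChar ξ ∧ ∃ (f : C(X, ℂ)) (c : ℂ), c ≠ 0 ∧
    Tendsto (fun n => avgC μ B n fun t => f (t +ᵥ x) * (starRingEnd ℂ) (ξ t)) atTop (𝓝 c)}

/-- Birkhoff's ergodic theorem holds along `(B n)` for `(X,G,m)`. -/
def BirkhoffAlong {G : Type*} [AddCommGroup G] [MeasurableSpace G] {X : Type*}
    [MeasurableSpace X] [AddAction G X] (μ : Measure G) (B : ℕ → Set G) (m : Measure X) :
    Prop :=
  ∀ f : X → ℂ, Integrable f m →
    ∀ᵐ x ∂m, Tendsto (fun n => avgC μ B n fun t => f (t +ᵥ x)) atTop (𝓝 (∫ z, f z ∂m))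

/-- `e` is (a representative of) the orthogonal projection in `L²(X,m)` of `f` onto the
eigenspace of `ξ`: it belongs to the eigenspace and `f - e` is orthogonal to it. -/
def IsProjOnEigenspace {G : Type*} [AddCommGroup G] {X : Type*} [MeasurableSpace X]
    [AddAction G X] (m : Measure X) (ξ : G → ℂ) (f e : X → ℂ) : Prop :=
  MemLp e 2 m ∧ (∀ t : G, (fun x => e (t +ᵥ x)) =ᵐ[m] fun x => ξ t * e x) ∧
    ∀ g : X → ℂ, MemLp g 2 m → (∀ t : G, (fun x => g (t +ᵥ x)) =ᵐ[m] fun x => ξ t * g x) →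
      ∫ x, (f x - e x) * (starRingEnd ℂ) (g x) ∂m = 0

/-- `d` is a metric on the topological space `X` which generates its topology. -/
structure IsCompatMetric {X : Type*} [TopologicalSpace X] (d : X → X → ℝ) : Prop where
  refl : ∀ x, d x x = 0
  eq_of : ∀ x y, d x y = 0 → x = y
  symm : ∀ x y, d x y = d y x
  triangle : ∀ x y z, d x z ≤ d x y + d y z
  nhds_basis : ∀ x : X, (𝓝 x).HasBasis (fun ε : ℝ => 0 < ε) fun ε => {y | d x y < ε}

/-- The metric `d̄(y,z) = sup_{s ∈ G} dist (s y) (s z)`. -/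
def supDist (G : Type*) [AddCommGroup G] {X : Type*} [PseudoMetricSpace X] [AddAction G X]
    (y z : X) : ℝ :=
  ⨆ s : G, dist (s +ᵥ y) (s +ᵥ z)

/-- The function `f_x : t ↦ f (t +ᵥ x)` as a bounded continuous function on `G`. -/
def fnAlong {G : Type*} [AddCommGroup G] [TopologicalSpace G] {X : Type*}
    [TopologicalSpace X] [CompactSpace X] [AddAction G X] [ContinuousVAdd G X]
    (f : C(X, ℂ)) (x : X) : BoundedContinuousFunction G ℂ :=
  BoundedContinuousFunction.ofNormedAddCommGroup (fun t => f (t +ᵥ x))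
    (f.continuous.comp (continuous_vadd.comp (continuous_id.prodMk continuous_const)))
    ‖f‖ (fun t => f.norm_coe_le_norm _)

/-- The translate `F(· - t)` of a bounded continuous function on `G`. -/
def translateB {G : Type*} [AddCommGroup G] [TopologicalSpace G] [IsTopologicalAddGroup G]
    (t : G) (F : BoundedContinuousFunction G ℂ) : BoundedContinuousFunction G ℂ :=
  F.compContinuous ⟨fun s => s - t, continuous_sub_right t⟩

/-- A bounded continuous function on `G` is weakly almost periodic if it is uniformly
continuous and its set of translates is relatively compact in the weak topology. -/
def WeaklyAPFun {G : Type*} [AddCommGroup G] [UniformSpace G] [IsUniformAddGroup G]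
    (F : BoundedContinuousFunction G ℂ) : Prop :=
  UniformContinuous ⇑F ∧
    IsCompact (closure
      ((toWeakSpace ℂ (BoundedContinuousFunction G ℂ)) '' Set.range fun t : G => translateB t F))

/-- A point `x` is weakly almost periodic if `f_x` is weakly almost periodic for every
continuous `f : X → ℂ`. -/
def WeaklyAPPoint (G : Type*) [AddCommGroup G] [UniformSpace G] [IsUniformAddGroup G]
    {X : Type*} [TopologicalSpace X] [CompactSpace X] [AddAction G X] [ContinuousVAdd G X]
    (x : X) : Prop :=
  ∀ f : C(X, ℂ), WeaklyAPFun (G := G) (fnAlong f x)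

/-- A point `x` is Bohr almost periodic if `f_x` is Bohr almost periodic for every
continuous `f : X → ℂ`. -/
def BohrAPPoint (G : Type*) [AddCommGroup G] [TopologicalSpace G] {X : Type*}
    [TopologicalSpace X] [AddAction G X] (x : X) : Prop :=
  ∀ f : C(X, ℂ), BohrAPFun fun t : G => f (t +ᵥ x)

/-- The function `f_t : x ↦ f (t +ᵥ x)` as a continuous function on `X`. -/
def translateCM {G : Type*} [AddCommGroup G] {X : Type*} [TopologicalSpace X] [AddAction G X]
    [ContinuousConstVAdd G X] (t : G) (f : C(X, ℂ)) : C(X, ℂ) :=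
  f.comp ⟨fun x => t +ᵥ x, continuous_const_vadd t⟩

/-- `(X,G)` is a weakly almost periodic dynamical system: for every `f ∈ C(X)` the family
`{f_t : t ∈ G}` is relatively compact in the weak topology of `C(X)`. -/
def WeaklyAPSystem (G : Type*) (X : Type*) [AddCommGroup G] [TopologicalSpace X]
    [CompactSpace X] [T2Space X] [AddAction G X] [ContinuousConstVAdd G X] : Prop :=
  ∀ f : C(X, ℂ),
    IsCompact (closure ((toWeakSpace ℂ C(X, ℂ)) '' Set.range fun t : G => translateCM t f))

section CharBasic
variable {G : Type*} [AddCommGroup G] [TopologicalSpace G]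

lemma IsChar.map_zero_eq_one {χ : G → ℂ} (hχ : IsChar χ) : χ 0 = 1 := by
  have h := hχ.2.2 0 0
  rw [add_zero] at h
  have hn : χ 0 ≠ 0 := by
    intro h0
    have h1 := hχ.2.1 0
    rw [h0] at h1; simp at h1
  have : χ 0 * 1 = χ 0 * χ 0 := by rw [mul_one]; exact h
  exact (mul_left_cancel₀ hn this).symm

lemma IsChar.mul_conj_self {χ : G → ℂ} (hχ : IsChar χ) (t : G) :
    χ t * (starRingEnd ℂ) (χ t) = 1 := by
  rw [Complex.mul_conj]
  norm_cast
  rw [Complex.normSq_eq_norm_sq]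
  have := hχ.2.1 t
  rw [this]; norm_num

lemma IsChar.conj {χ : G → ℂ} (hχ : IsChar χ) : IsChar (fun t => (starRingEnd ℂ) (χ t)) := by
  refine ⟨Complex.continuous_conj.comp hχ.1, fun t => by simp [hχ.2.1 t], fun s t => by
    show (starRingEnd ℂ) (χ (s + t)) = _
    rw [hχ.2.2 s t, map_mul]⟩

lemma IsChar.mul {χ η : G → ℂ} (hχ : IsChar χ) (hη : IsChar η) :
    IsChar (fun t => χ t * η t) := by
  refine ⟨hχ.1.mul hη.1, fun t => by rw [norm_mul, hχ.2.1 t, hη.2.1 t, one_mul], fun s t => by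
    show χ (s + t) * η (s + t) = _
    rw [hχ.2.2 s t, hη.2.2 s t]; ring⟩

end CharBasic

section Core
variable {G : Type*} [AddCommGroup G] [TopologicalSpace G] [IsTopologicalAddGroup G] [T2Space G]
  [LocallyCompactSpace G] [SigmaCompactSpace G] [MeasurableSpace G] [BorelSpace G]
  {μ : Measure G} [μ.IsAddHaarMeasure] {B : ℕ → Set G}

lemma IsFolner.meas_lt_top (hB : IsFolner μ B) (n : ℕ) : μ (B n) < ⊤ :=
  lt_of_le_of_lt (measure_mono subset_closure) (hB.relCompact n).measure_lt_top

lemma IsFolner.meas_ne_top (hB : IsFolner μ B) (n : ℕ) : μ (B n) ≠ ⊤ := (hB.meas_lt_top n).ne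

lemma IsFolner.toReal_pos (hB : IsFolner μ B) (n : ℕ) : 0 < (μ (B n)).toReal :=
  ENNReal.toReal_pos ((hB.isOpen n).measure_pos μ (hB.nonempty n)).ne' (hB.meas_ne_top n)

lemma IsFolner.integrableOn {E : Type*} [NormedAddCommGroup E] [SecondCountableTopology E] (hB : IsFolner μ B) (n : ℕ)
    {h : G → E} (hc : Continuous h) (C : ℝ) (hb : ∀ t, ‖h t‖ ≤ C) :
    IntegrableOn h (B n) μ :=
  Integrable.mono' (integrableOn_const (hB.meas_lt_top n).ne)
    hc.aestronglyMeasurable.restrict (Eventually.of_forall hb)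

lemma avgC_const (hB : IsFolner μ B) (n : ℕ) (c : ℂ) : avgC μ B n (fun _ => c) = c := by
  rw [avgC, setIntegral_const, measureReal_def, smul_smul, inv_mul_cancel₀ (hB.toReal_pos n).ne', one_smul]

lemma avg_const (hB : IsFolner μ B) (n : ℕ) (c : ℝ) : avg μ B n (fun _ => c) = c := by
  rw [avg, setIntegral_const, measureReal_def, smul_eq_mul, ← mul_assoc,
    inv_mul_cancel₀ (hB.toReal_pos n).ne', one_mul]

lemma norm_avgC_le (hB : IsFolner μ B) (n : ℕ) {h : G → ℂ} {C : ℝ}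
    (hm : AEStronglyMeasurable h (μ.restrict (B n))) (hb : ∀ t ∈ B n, ‖h t‖ ≤ C) :
    ‖avgC μ B n h‖ ≤ C := by
  have h1 : ‖∫ t in B n, h t ∂μ‖ ≤ C * (μ (B n)).toReal :=
    norm_setIntegral_le_of_norm_le_const (hB.meas_lt_top n) hb
  rw [avgC, norm_smul, Real.norm_of_nonneg (by positivity)]
  calc (μ (B n)).toReal⁻¹ * ‖∫ t in B n, h t ∂μ‖ ≤ (μ (B n)).toReal⁻¹ * (C * (μ (B n)).toReal) := by
        exact mul_le_mul_of_nonneg_left h1 (by positivity)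
    _ = C := by field_simp [(hB.toReal_pos n).ne']

lemma abs_avg_le (hB : IsFolner μ B) (n : ℕ) {h : G → ℝ} {C : ℝ}
    (hm : AEStronglyMeasurable h (μ.restrict (B n))) (hb : ∀ t ∈ B n, |h t| ≤ C) :
    |avg μ B n h| ≤ C := by
  have h1 : ‖∫ t in B n, h t ∂μ‖ ≤ C * (μ (B n)).toReal :=
    norm_setIntegral_le_of_norm_le_const (f := h) (hB.meas_lt_top n) hb
  rw [avg, abs_mul, abs_of_nonneg (a := (μ (B n)).toReal⁻¹) (by positivity)]
  calc (μ (B n)).toReal⁻¹ * |∫ t in B n, h t ∂μ| ≤ (μ (B n)).toReal⁻¹ * (C * (μ (B n)).toReal) :=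
        mul_le_mul_of_nonneg_left h1 (by positivity)
    _ = C := by field_simp [(hB.toReal_pos n).ne']

lemma avg_nonneg {n : ℕ} {h : G → ℝ} (hp : ∀ t, 0 ≤ h t) : 0 ≤ avg μ B n h :=
  mul_nonneg (by positivity) (setIntegral_nonneg_of_ae_restrict (Eventually.of_forall hp))

lemma avg_mono {n : ℕ} (hB : IsFolner μ B) {h g : G → ℝ} (hi : IntegrableOn h (B n) μ)
    (hgi : IntegrableOn g (B n) μ) (hle : ∀ t ∈ B n, h t ≤ g t) :
    avg μ B n h ≤ avg μ B n g :=
  mul_le_mul_of_nonneg_left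
    (setIntegral_mono_on hi hgi (hB.isOpen n).measurableSet hle) (by positivity)

lemma avg_add {n : ℕ} {h g : G → ℝ} (hi : IntegrableOn h (B n) μ)
    (hgi : IntegrableOn g (B n) μ) :
    avg μ B n (fun t => h t + g t) = avg μ B n h + avg μ B n g := by
  rw [avg, avg, avg, integral_add hi hgi, mul_add]

lemma avg_smul {n : ℕ} (a : ℝ) (h : G → ℝ) :
    avg μ B n (fun t => a * h t) = a * avg μ B n h := by
  rw [avg, avg, integral_const_mul, mul_left_comm]

lemma avgC_sub {n : ℕ} {h g : G → ℂ} (hi : IntegrableOn h (B n) μ)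
    (hgi : IntegrableOn g (B n) μ) :
    avgC μ B n (fun t => h t - g t) = avgC μ B n h - avgC μ B n g := by
  rw [avgC, avgC, avgC, integral_sub hi hgi, smul_sub]

lemma avgC_mul_const {n : ℕ} (a : ℂ) (h : G → ℂ) :
    avgC μ B n (fun t => a * h t) = a * avgC μ B n h := by
  rw [avgC, avgC, integral_const_mul]
  simp only [Complex.real_smul]
  ring

lemma norm_avgC_le_avg_norm {n : ℕ} (h : G → ℂ) :
    ‖avgC μ B n h‖ ≤ avg μ B n (fun t => ‖h t‖) := by
  rw [avgC, avg, norm_smul, Real.norm_of_nonneg (by positivity)]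
  exact mul_le_mul_of_nonneg_left (norm_integral_le_integral_norm _) (by positivity)


lemma preimage_addLeft_vadd (k : G) (A : Set G) : (fun t => k + t) ⁻¹' (k +ᵥ A) = A := by
  ext t
  constructor
  · rintro ⟨y, hy, e⟩
    have : y = t := by
      have e' : k + y = k + t := e
      exact add_left_cancel e'
    rwa [← this]
  · intro ht
    exact ⟨t, ht, rfl⟩

lemma setIntegral_vadd (k : G) (A : Set G) (h : G → ℂ) :
    ∫ t in (k +ᵥ A), h t ∂μ = ∫ t in A, h (k + t) ∂μ := by
  have hemb : MeasurableEmbedding (fun t : G => k + t) :=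
    (MeasurableEquiv.addLeft k).measurableEmbedding
  conv_lhs => rw [← (measurePreserving_add_left μ k).map_eq]
  rw [hemb.setIntegral_map, preimage_addLeft_vadd]

lemma setIntegral_diff_bound (hB : IsFolner μ B) (n : ℕ) (k : G) {h : G → ℂ}
    (hc : Continuous h) {C : ℝ} (hb : ∀ t, ‖h t‖ ≤ C) :
    ‖(∫ t in B n, h t ∂μ) - ∫ t in (k +ᵥ B n), h t ∂μ‖
      ≤ C * (μ ((B n \ (k +ᵥ B n)) ∪ ((k +ᵥ B n) \ B n))).toReal := by
  have hA : MeasurableSet (B n) := (hB.isOpen n).measurableSet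
  have hA' : MeasurableSet (k +ᵥ B n) := hA.const_vadd k
  have hμA' : μ (k +ᵥ B n) < ⊤ := by rw [measure_vadd]; exact hB.meas_lt_top n
  have hiA : IntegrableOn h (B n) μ := hB.integrableOn n hc C hb
  have hiA' : IntegrableOn h (k +ᵥ B n) μ :=
    Integrable.mono' (integrableOn_const hμA'.ne)
      hc.aestronglyMeasurable.restrict (Eventually.of_forall hb)
  have e1 : (∫ t in B n, h t ∂μ)
      = (∫ t in B n ∩ (k +ᵥ B n), h t ∂μ) + ∫ t in B n \ (k +ᵥ B n), h t ∂μ :=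
    (integral_inter_add_diff hA' hiA).symm
  have e2 : (∫ t in (k +ᵥ B n), h t ∂μ)
      = (∫ t in (k +ᵥ B n) ∩ B n, h t ∂μ) + ∫ t in (k +ᵥ B n) \ B n, h t ∂μ :=
    (integral_inter_add_diff hA hiA').symm
  have e3 : (∫ t in B n, h t ∂μ) - ∫ t in (k +ᵥ B n), h t ∂μ
      = (∫ t in B n \ (k +ᵥ B n), h t ∂μ) - ∫ t in (k +ᵥ B n) \ B n, h t ∂μ := by
    rw [e1, e2, inter_comm]; ring
  have hd1 : μ (B n \ (k +ᵥ B n)) < ⊤ :=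
    lt_of_le_of_lt (measure_mono diff_subset) (hB.meas_lt_top n)
  have hd2 : μ ((k +ᵥ B n) \ B n) < ⊤ := lt_of_le_of_lt (measure_mono diff_subset) hμA'
  have b1 : ‖∫ t in B n \ (k +ᵥ B n), h t ∂μ‖ ≤ C * (μ (B n \ (k +ᵥ B n))).toReal :=
    norm_setIntegral_le_of_norm_le_const hd1 (fun t _ => hb t)
  have b2 : ‖∫ t in (k +ᵥ B n) \ B n, h t ∂μ‖ ≤ C * (μ ((k +ᵥ B n) \ B n)).toReal :=
    norm_setIntegral_le_of_norm_le_const hd2 (fun t _ => hb t)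
  have hmu : (μ ((B n \ (k +ᵥ B n)) ∪ ((k +ᵥ B n) \ B n))).toReal
      = (μ (B n \ (k +ᵥ B n))).toReal + (μ ((k +ᵥ B n) \ B n)).toReal := by
    rw [measure_union (disjoint_sdiff_sdiff) (hA'.diff hA), ENNReal.toReal_add hd1.ne hd2.ne]
  rw [e3, hmu]
  calc ‖(∫ t in B n \ (k +ᵥ B n), h t ∂μ) - ∫ t in (k +ᵥ B n) \ B n, h t ∂μ‖
      ≤ ‖∫ t in B n \ (k +ᵥ B n), h t ∂μ‖ + ‖∫ t in (k +ᵥ B n) \ B n, h t ∂μ‖ :=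
        norm_sub_le _ _
    _ ≤ C * (μ (B n \ (k +ᵥ B n))).toReal + C * (μ ((k +ᵥ B n) \ B n)).toReal :=
        add_le_add b1 b2
    _ = C * ((μ (B n \ (k +ᵥ B n))).toReal + (μ ((k +ᵥ B n) \ B n)).toReal) := by ring

lemma avgC_translate_sub_tendsto (hB : IsFolner μ B) (k : G) {h : G → ℂ} (hc : Continuous h)
    {C : ℝ} (hb : ∀ t, ‖h t‖ ≤ C) :
    Tendsto (fun n => ‖avgC μ B n h - avgC μ B n (fun t => h (k + t))‖) atTop (𝓝 0) := by
  have key : ∀ n, ‖avgC μ B n h - avgC μ B n (fun t => h (k + t))‖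
      ≤ C * ((μ ((B n \ (k +ᵥ B n)) ∪ ((k +ᵥ B n) \ B n))).toReal / (μ (B n)).toReal) := by
    intro n
    have : avgC μ B n (fun t => h (k + t))
        = (μ (B n)).toReal⁻¹ • ∫ t in (k +ᵥ B n), h t ∂μ := by
      rw [avgC, setIntegral_vadd]
    rw [avgC, this, ← smul_sub, norm_smul, Real.norm_of_nonneg (by positivity)]
    calc (μ (B n)).toReal⁻¹ * ‖(∫ t in B n, h t ∂μ) - ∫ t in (k +ᵥ B n), h t ∂μ‖
        ≤ (μ (B n)).toReal⁻¹
          * (C * (μ ((B n \ (k +ᵥ B n)) ∪ ((k +ᵥ B n) \ B n))).toReal) :=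
          mul_le_mul_of_nonneg_left (setIntegral_diff_bound hB n k hc hb) (by positivity)
      _ = C * ((μ ((B n \ (k +ᵥ B n)) ∪ ((k +ᵥ B n) \ B n))).toReal / (μ (B n)).toReal) := by
          rw [div_eq_inv_mul]; ring
  have h0 : Tendsto (fun n => C
      * ((μ ((B n \ (k +ᵥ B n)) ∪ ((k +ᵥ B n) \ B n))).toReal / (μ (B n)).toReal))
      atTop (𝓝 0) := by
    simpa using (hB.folner k).const_mul C
  exact squeeze_zero (fun n => norm_nonneg _) key h0

lemma char_avgC_tendsto_zero (hB : IsFolner μ B) {χ : G → ℂ} (hχ : IsChar χ) {t₀ : G}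
    (h1 : χ t₀ ≠ 1) : Tendsto (fun n => avgC μ B n χ) atTop (𝓝 0) := by
  have hb : ∀ t, ‖χ t‖ ≤ 1 := fun t => (hχ.2.1 t).le
  have heq : ∀ n, ‖avgC μ B n χ - avgC μ B n (fun t => χ (t₀ + t))‖
      = ‖1 - χ t₀‖ * ‖avgC μ B n χ‖ := by
    intro n
    have e : avgC μ B n (fun t => χ (t₀ + t)) = χ t₀ * avgC μ B n χ := by
      have : (fun t => χ (t₀ + t)) = fun t => χ t₀ * χ t := by
        funext t; exact hχ.2.2 t₀ t
      rw [this, avgC_mul_const]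
    rw [e, ← norm_mul]
    congr 1; ring
  have hz := avgC_translate_sub_tendsto hB t₀ hχ.1 hb
  have hz' : Tendsto (fun n => ‖1 - χ t₀‖ * ‖avgC μ B n χ‖) atTop (𝓝 0) := by
    have : (fun n => ‖1 - χ t₀‖ * ‖avgC μ B n χ‖)
        = fun n => ‖avgC μ B n χ - avgC μ B n (fun t => χ (t₀ + t))‖ := by
      funext n; rw [heq n]
    rw [this]; exact hz
  have hne : (‖1 - χ t₀‖ : ℝ) ≠ 0 := by
    rw [norm_ne_zero_iff, sub_ne_zero]
    exact fun hcon => h1 hcon.symm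
  rw [tendsto_zero_iff_norm_tendsto_zero]
  have hfin := hz'.const_mul (‖1 - χ t₀‖)⁻¹
  rw [mul_zero] at hfin
  have heq2 : (fun n => (‖1 - χ t₀‖)⁻¹ * (‖1 - χ t₀‖ * ‖avgC μ B n χ‖))
      = fun n => ‖avgC μ B n χ‖ := by
    funext n; rw [← mul_assoc, inv_mul_cancel₀ hne, one_mul]
  exact heq2 ▸ hfin

lemma char_orth (hB : IsFolner μ B) {χ η : G → ℂ} (hχ : IsChar χ) (hη : IsChar η)
    (hne : χ ≠ η) :
    Tendsto (fun n => avgC μ B n (fun t => χ t * (starRingEnd ℂ) (η t))) atTop (𝓝 0) := by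
  obtain ⟨t₀, ht₀⟩ : ∃ t, χ t ≠ η t := by
    by_contra hcon; push_neg at hcon; exact hne (funext hcon)
  refine char_avgC_tendsto_zero hB (hχ.mul hη.conj) (t₀ := t₀) ?_
  intro hval
  apply ht₀
  have h2 : χ t₀ * ((starRingEnd ℂ) (η t₀) * η t₀) = η t₀ := by
    rw [← mul_assoc, hval, one_mul]
  rw [mul_comm ((starRingEnd ℂ) (η t₀)) (η t₀), hη.mul_conj_self t₀, mul_one] at h2
  exact h2

lemma char_diag (hB : IsFolner μ B) {χ : G → ℂ} (hχ : IsChar χ) (n : ℕ) :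
    avgC μ B n (fun t => χ t * (starRingEnd ℂ) (χ t)) = 1 := by
  have : (fun t => χ t * (starRingEnd ℂ) (χ t)) = fun _ => (1 : ℂ) := by
    funext t; exact hχ.mul_conj_self t
  rw [this, avgC_const hB]

lemma avg_norm_le_lambda (hB : IsFolner μ B) (n : ℕ) {h : G → ℂ} (hc : Continuous h)
    {C : ℝ} (hb : ∀ t, ‖h t‖ ≤ C) {lam : ℝ} (hlam : 0 < lam) :
    avg μ B n (fun t => ‖h t‖) ≤ (2*lam)⁻¹ * avg μ B n (fun t => ‖h t‖^2) + lam/2 := by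
  have hC0 : 0 ≤ C := le_trans (norm_nonneg _) (hb 0)
  have pointwise : ∀ t, ‖h t‖ ≤ (2*lam)⁻¹ * ‖h t‖^2 + lam/2 := by
    intro t
    have h1 : 0 ≤ (‖h t‖ - lam)^2 := sq_nonneg _
    have h2 : (2*lam)⁻¹ * (‖h t‖ - lam)^2 ≥ 0 := by positivity
    have : (2*lam)⁻¹ * (‖h t‖ - lam)^2
        = (2*lam)⁻¹ * ‖h t‖^2 + lam/2 - ‖h t‖ := by field_simp; ring
    linarith [this ▸ h2]
  have hi1 : IntegrableOn (fun t => ‖h t‖) (B n) μ :=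
    hB.integrableOn n hc.norm C (fun t => by rw [norm_norm]; exact hb t)
  have hi2 : IntegrableOn (fun t => (2*lam)⁻¹ * ‖h t‖^2 + lam/2) (B n) μ := by
    apply hB.integrableOn n (by continuity) ((2*lam)⁻¹ * C^2 + lam/2)
    intro t
    have h0 : ‖h t‖^2 ≤ C^2 := by nlinarith [norm_nonneg (h t), hb t]
    rw [Real.norm_of_nonneg (by positivity)]
    have : (2*lam)⁻¹ * ‖h t‖^2 ≤ (2*lam)⁻¹ * C^2 := by
      apply mul_le_mul_of_nonneg_left h0 (by positivity)
    linarith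
  calc avg μ B n (fun t => ‖h t‖) ≤ avg μ B n (fun t => (2*lam)⁻¹ * ‖h t‖^2 + lam/2) :=
        avg_mono hB hi1 hi2 (fun t _ => pointwise t)
    _ = (2*lam)⁻¹ * avg μ B n (fun t => ‖h t‖^2) + lam/2 := by
        have hia : IntegrableOn (fun t => (2*lam)⁻¹ * ‖h t‖^2) (B n) μ := by
          apply hB.integrableOn n (by continuity) ((2*lam)⁻¹ * C^2)
          intro t
          have h0 : ‖h t‖^2 ≤ C^2 := by nlinarith [norm_nonneg (h t), hb t]
          rw [Real.norm_of_nonneg (by positivity)]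
          exact mul_le_mul_of_nonneg_left h0 (by positivity)
        have hib : IntegrableOn (fun _ : G => lam/2) (B n) μ :=
          integrableOn_const (hB.meas_lt_top n).ne
        rw [avg_add hia hib, avg_smul, avg_const hB]


lemma continuous_avgC_param (hB : IsFolner μ B) (n : ℕ) {Y : Type*} [TopologicalSpace Y]
    [FirstCountableTopology Y] {F : G → Y → ℂ} (hF : Continuous fun p : G × Y => F p.1 p.2)
    {C : ℝ} (hb : ∀ t y, ‖F t y‖ ≤ C) :
    Continuous fun y => avgC μ B n (fun t => F t y) := by
  unfold avgC
  apply Continuous.fun_const_smul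
  apply continuous_of_dominated (bound := fun _ => C)
  · intro y
    exact ((hF.comp (continuous_id.prodMk continuous_const)).aestronglyMeasurable).restrict
  · intro y
    exact Eventually.of_forall (fun t => hb t y)
  · exact integrableOn_const (hB.meas_lt_top n).ne
  · exact Eventually.of_forall (fun t => hF.comp (continuous_const.prodMk continuous_id))

lemma continuous_avg_param (hB : IsFolner μ B) (n : ℕ) {Y : Type*} [TopologicalSpace Y]
    [FirstCountableTopology Y] {F : G → Y → ℝ} (hF : Continuous fun p : G × Y => F p.1 p.2)
    {C : ℝ} (hb : ∀ t y, |F t y| ≤ C) :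
    Continuous fun y => avg μ B n (fun t => F t y) := by
  unfold avg
  apply Continuous.mul continuous_const
  apply continuous_of_dominated (bound := fun _ => C)
  · intro y
    exact ((hF.comp (continuous_id.prodMk continuous_const)).aestronglyMeasurable).restrict
  · intro y
    exact Eventually.of_forall (fun t => hb t y)
  · exact integrableOn_const (hB.meas_lt_top n).ne
  · exact Eventually.of_forall (fun t => hF.comp (continuous_const.prodMk continuous_id))

end Core

section LimsupHelpers

lemma isBoundedUnder_of_le {u : ℕ → ℝ} {K : ℝ} (h : ∀ n, u n ≤ K) :
    IsBoundedUnder (· ≤ ·) atTop u :=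
  isBoundedUnder_of ⟨K, fun n => h n⟩

lemma isCoboundedUnder_of_ge {u : ℕ → ℝ} {K : ℝ} (h : ∀ n, K ≤ u n) :
    IsCoboundedUnder (· ≤ ·) atTop u :=
  (isBoundedUnder_of (α := ℝ) (f := atTop) (u := u) (r := (· ≥ ·))
    ⟨K, fun n => h n⟩).isCoboundedUnder_flip

lemma real_limsup_le_of_eventually {u : ℕ → ℝ} {K : ℝ} (h0 : ∀ n, K ≤ u n) {a : ℝ}
    (h : ∀ᶠ n in atTop, u n ≤ a) : limsup u atTop ≤ a :=
  limsup_le_of_le (isCoboundedUnder_of_ge h0) h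

lemma real_limsup_le_of_pos {u : ℕ → ℝ} {K : ℝ} (h0 : ∀ n, K ≤ u n) {a : ℝ}
    (h : ∀ ε : ℝ, 0 < ε → ∀ᶠ n in atTop, u n ≤ a + ε) : limsup u atTop ≤ a := by
  refine le_of_forall_pos_le_add (fun ε hε => ?_)
  exact real_limsup_le_of_eventually h0 (h ε hε)

lemma eventually_le_of_limsup_le {u : ℕ → ℝ} {K : ℝ} (hK : ∀ n, u n ≤ K) {a : ℝ}
    (h : limsup u atTop ≤ a) {ε : ℝ} (hε : 0 < ε) : ∀ᶠ n in atTop, u n < a + ε := by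
  refine eventually_lt_of_limsup_lt (lt_of_le_of_lt h (by linarith)) (isBoundedUnder_of_le hK)

lemma tendsto_zero_of_limsup_le {u : ℕ → ℝ} {K : ℝ} (h0 : ∀ n, 0 ≤ u n) (hK : ∀ n, u n ≤ K)
    (h : limsup u atTop ≤ 0) : Tendsto u atTop (𝓝 0) := by
  rw [tendsto_order]
  constructor
  · intro a ha
    exact Eventually.of_forall (fun n => lt_of_lt_of_le ha (h0 n))
  · intro a ha
    have := eventually_le_of_limsup_le hK h (ε := a) ha
    simpa using this

lemma le_limsup_of_tendsto_sub {u v : ℕ → ℝ} {K : ℝ} (hK : ∀ n, u n ≤ K) (h0 : ∀ n, 0 ≤ u n)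
    {L : ℝ} (hv : Tendsto v atTop (𝓝 L)) (hle : ∀ n, u n ≤ v n) : limsup u atTop ≤ L := by
  refine real_limsup_le_of_pos h0 (fun ε hε => ?_)
  have := (Metric.tendsto_atTop.1 hv) ε hε
  obtain ⟨N, hN⟩ := this
  refine eventually_atTop.2 ⟨N, fun n hn => ?_⟩
  have h1 := hN n hn
  rw [Real.dist_eq, abs_lt] at h1
  linarith [hle n]

end LimsupHelpers

section Dyn
variable {G : Type*} [AddCommGroup G] [TopologicalSpace G] [IsTopologicalAddGroup G] [T2Space G]
  [LocallyCompactSpace G] [SigmaCompactSpace G] [MeasurableSpace G] [BorelSpace G]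
  {μ : Measure G} [μ.IsAddHaarMeasure] {B : ℕ → Set G}
  {X : Type*} [MetricSpace X] [CompactSpace X] [MeasurableSpace X] [BorelSpace X]
  [AddAction G X] [ContinuousVAdd G X] {m : Measure X} [IsProbabilityMeasure m]

lemma continuous_orbit (f : C(X,ℂ)) (x : X) : Continuous fun t : G => f (t +ᵥ x) :=
  f.continuous.comp (continuous_vadd.comp (continuous_id.prodMk continuous_const))

lemma integrable_cm (f : C(X,ℂ)) : Integrable (fun z => f z) m := by
  apply Integrable.mono' (integrable_const ‖f‖) f.continuous.aestronglyMeasurable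
  exact Eventually.of_forall (fun z => f.norm_coe_le_norm z)

lemma continuous_avgC_orbit (hB : IsFolner μ B) (n : ℕ) (f : C(X,ℂ)) {P : G → ℂ}
    (hPc : Continuous P) {CP : ℝ} (hPb : ∀ t, ‖P t‖ ≤ CP) :
    Continuous fun y : X => avgC μ B n (fun t => f (t +ᵥ y) * P t) := by
  apply continuous_avgC_param hB n (C := ‖f‖ * CP)
  · exact (f.continuous.comp (continuous_vadd.comp
      ((continuous_fst).prodMk continuous_snd))).mul (hPc.comp continuous_fst)
  · intro t y
    rw [norm_mul]
    exact mul_le_mul (f.norm_coe_le_norm _) (hPb t) (norm_nonneg _) (norm_nonneg f)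

lemma measurableSet_tendsto_avgC {Φ : ℕ → X → ℂ} (hΦ : ∀ n, Continuous (Φ n)) (c : ℂ) :
    MeasurableSet {x | Tendsto (fun n => Φ n x) atTop (𝓝 c)} := by
  have heq : {x | Tendsto (fun n => Φ n x) atTop (𝓝 c)}
      = ⋂ (j : ℕ), ⋃ (N : ℕ), ⋂ (n : ℕ), ⋂ (_ : N ≤ n),
          {x | dist (Φ n x) c ≤ 1/(j+1)} := by
    ext x
    simp only [mem_setOf_eq, mem_iInter, mem_iUnion]
    constructor
    · intro hx j
      obtain ⟨N, hN⟩ := Metric.tendsto_atTop.1 hx (1/(j+1)) (by positivity)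
      exact ⟨N, fun n hn => (hN n hn).le⟩
    · intro hx
      rw [Metric.tendsto_atTop]
      intro ε hε
      obtain ⟨j, hj⟩ := exists_nat_one_div_lt hε
      obtain ⟨N, hN⟩ := hx j
      refine ⟨N, fun n hn => lt_of_le_of_lt (hN n hn) ?_⟩
      exact_mod_cast hj
  rw [heq]
  refine MeasurableSet.iInter fun j => MeasurableSet.iUnion fun N =>
    MeasurableSet.iInter fun n => MeasurableSet.iInter fun _ => ?_
  exact (isClosed_le ((hΦ n).dist continuous_const) continuous_const).measurableSet

lemma isGeneric_of_dense {D : Set C(X,ℂ)} (hB : IsFolner μ B) (hD : Dense D) (x : X)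
    (h : ∀ f ∈ D,
      Tendsto (fun n => avgC μ B n fun t => f (t +ᵥ x)) atTop (𝓝 (∫ z, f z ∂m))) :
    IsGeneric μ B m x := by
  intro g
  rw [Metric.tendsto_atTop]
  intro ε hε
  obtain ⟨f, hfD, hdist⟩ := hD.exists_dist_lt g (by positivity : (0:ℝ) < ε/4)
  obtain ⟨N, hN⟩ := Metric.tendsto_atTop.1 (h f hfD) (ε/4) (by positivity)
  refine ⟨N, fun n hn => ?_⟩
  have key1 : dist (avgC μ B n fun t => g (t +ᵥ x)) (avgC μ B n fun t => f (t +ᵥ x)) ≤ ε/4 := by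
    rw [dist_eq_norm, ← avgC_sub (hB.integrableOn n (continuous_orbit g x) ‖g‖
      (fun t => g.norm_coe_le_norm _)) (hB.integrableOn n (continuous_orbit f x) ‖f‖
      (fun t => f.norm_coe_le_norm _))]
    apply norm_avgC_le hB n
      (((continuous_orbit g x).sub (continuous_orbit f x)).aestronglyMeasurable.restrict)
    intro t _
    calc ‖g (t +ᵥ x) - f (t +ᵥ x)‖ = dist (g (t +ᵥ x)) (f (t +ᵥ x)) := (dist_eq_norm _ _).symm
      _ ≤ dist g f := ContinuousMap.dist_apply_le_dist _
      _ ≤ ε/4 := hdist.le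
  have key2 : dist (∫ z, f z ∂m) (∫ z, g z ∂m) ≤ ε/4 := by
    rw [dist_eq_norm, ← integral_sub (integrable_cm f) (integrable_cm g)]
    calc ‖∫ z, (f z - g z) ∂m‖ ≤ ∫ z, ‖f z - g z‖ ∂m := norm_integral_le_integral_norm _
      _ ≤ ∫ _, (ε/4 : ℝ) ∂m := by
          apply integral_mono ((integrable_cm f).sub (integrable_cm g)).norm
            (integrable_const _)
          intro z
          calc ‖f z - g z‖ = dist (f z) (g z) := (dist_eq_norm _ _).symm
            _ ≤ dist f g := ContinuousMap.dist_apply_le_dist _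
            _ ≤ ε/4 := (dist_comm g f ▸ hdist).le
      _ = ε/4 := by simp
  calc dist (avgC μ B n fun t => g (t +ᵥ x)) (∫ z, g z ∂m)
      ≤ dist (avgC μ B n fun t => g (t +ᵥ x)) (avgC μ B n fun t => f (t +ᵥ x))
        + dist (avgC μ B n fun t => f (t +ᵥ x)) (∫ z, f z ∂m)
        + dist (∫ z, f z ∂m) (∫ z, g z ∂m) := dist_triangle4 _ _ _ _
    _ < ε/4 + ε/4 + ε/4 := by
        have h3 := hN n hn
        have := add_lt_add_of_le_of_lt key1 h3
        linarith
    _ < ε := by linarith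

lemma measurableSet_isGeneric (hB : IsFolner μ B) :
    MeasurableSet {x : X | IsGeneric μ B m x} := by
  obtain ⟨D, hDc, hDd⟩ := TopologicalSpace.exists_countable_dense C(X,ℂ)
  have heq : {x : X | IsGeneric μ B m x} = ⋂ f ∈ D,
      {x | Tendsto (fun n => avgC μ B n fun t => f (t +ᵥ x)) atTop (𝓝 (∫ z, f z ∂m))} := by
    ext x
    simp only [mem_setOf_eq, mem_iInter]
    exact ⟨fun hx f _ => hx f, fun hx => isGeneric_of_dense hB hDd x hx⟩
  rw [heq]
  refine MeasurableSet.biInter hDc fun f _ => measurableSet_tendsto_avgC (fun n => ?_) _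
  have := continuous_avgC_orbit hB n f (P := fun _ => (1:ℂ)) continuous_const
    (CP := 1) (fun t => by norm_num)
  simpa using this


end Dyn

lemma avgC_ofReal {G' : Type*} [MeasurableSpace G'] (μ' : Measure G') (B' : ℕ → Set G')
    (n : ℕ) (g : G' → ℝ) :
    avgC μ' B' n (fun t => ((g t : ℝ) : ℂ)) = ((avg μ' B' n g : ℝ) : ℂ) := by
  have h1 : ∫ t in B' n, ((g t : ℝ) : ℂ) ∂μ' = ((∫ t in B' n, g t ∂μ' : ℝ) : ℂ) :=
    integral_ofReal
  rw [avgC, avg, h1, Complex.real_smul, Complex.ofReal_mul]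

/-- The spectral weight `W_mi(f, χ) = ∫_X ‖(1/|B_mi|) ∫_{B_mi} f(k+y) χ̄(k) dk‖² dm(y)`. -/
def Wq {G : Type*} [AddCommGroup G] [TopologicalSpace G] [MeasurableSpace G] (μ : Measure G)
    (B : ℕ → Set G) {X : Type*} [TopologicalSpace X] [MeasurableSpace X] [AddAction G X]
    (m : Measure X) (mi : ℕ) (f : C(X,ℂ)) (χ : G → ℂ) : ℝ :=
  ∫ y, ‖avgC μ B mi (fun k => f (k +ᵥ y) * (starRingEnd ℂ) (χ k))‖^2 ∂m

lemma Wq_nonneg {G : Type*} [AddCommGroup G] [TopologicalSpace G] [MeasurableSpace G]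
    {μ : Measure G} {B : ℕ → Set G} {X : Type*} [TopologicalSpace X] [MeasurableSpace X]
    [AddAction G X] {m : Measure X} (mi : ℕ) (f : C(X,ℂ)) (χ : G → ℂ) :
    0 ≤ Wq μ B m mi f χ :=
  integral_nonneg (fun y => by positivity)

section MainEst
variable {G : Type*} [AddCommGroup G] [TopologicalSpace G] [IsTopologicalAddGroup G] [T2Space G]
  [LocallyCompactSpace G] [SigmaCompactSpace G] [MeasurableSpace G] [BorelSpace G]
  {μ : Measure G} [μ.IsAddHaarMeasure] {B : ℕ → Set G}
  {X : Type*} [MetricSpace X] [CompactSpace X] [MeasurableSpace X] [BorelSpace X]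
  [AddAction G X] [ContinuousVAdd G X] {m : Measure X} [IsProbabilityMeasure m]

lemma conj_char_cont {χ : G → ℂ} (hχ : IsChar χ) :
    Continuous fun t => (starRingEnd ℂ) (χ t) := Complex.continuous_conj.comp hχ.1

lemma conj_char_bd {χ : G → ℂ} (hχ : IsChar χ) (t : G) : ‖(starRingEnd ℂ) (χ t)‖ ≤ 1 := by
  simp [hχ.2.1 t]

lemma orbit_mul_char_cont (f : C(X,ℂ)) (y : X) {χ : G → ℂ} (hχ : IsChar χ) :
    Continuous fun k : G => f (k +ᵥ y) * (starRingEnd ℂ) (χ k) :=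
  (continuous_orbit f y).mul (conj_char_cont hχ)

lemma orbit_mul_char_bd (f : C(X,ℂ)) (y : X) {χ : G → ℂ} (hχ : IsChar χ) (k : G) :
    ‖f (k +ᵥ y) * (starRingEnd ℂ) (χ k)‖ ≤ ‖f‖ := by
  rw [norm_mul]
  have h1 : ‖(starRingEnd ℂ) (χ k)‖ = 1 := by simp [hχ.2.1 k]
  rw [h1, mul_one]
  exact f.norm_coe_le_norm _

lemma V_bd (hB : IsFolner μ B) (mi : ℕ) (f : C(X,ℂ)) {χ : G → ℂ} (hχ : IsChar χ) (y : X) :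
    ‖avgC μ B mi (fun k => f (k +ᵥ y) * (starRingEnd ℂ) (χ k))‖ ≤ ‖f‖ :=
  norm_avgC_le hB mi (orbit_mul_char_cont f y hχ).aestronglyMeasurable.restrict
    (fun k _ => orbit_mul_char_bd f y hχ k)

lemma tendsto_avg_V_sq (hB : IsFolner μ B) {x : X} (hx : IsGeneric μ B m x) (f : C(X,ℂ))
    {χ : G → ℂ} (hχ : IsChar χ) (mi : ℕ) :
    Tendsto (fun n => avg μ B n (fun t =>
        ‖avgC μ B mi (fun k => f (k +ᵥ (t +ᵥ x)) * (starRingEnd ℂ) (χ k))‖^2))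
      atTop (𝓝 (Wq μ B m mi f χ)) := by
  have hVc : Continuous fun y : X => avgC μ B mi (fun k => f (k +ᵥ y) * (starRingEnd ℂ) (χ k)) :=
    continuous_avgC_orbit hB mi f (conj_char_cont hχ) (conj_char_bd hχ)
  have hgc : Continuous fun y : X =>
      ((‖avgC μ B mi (fun k => f (k +ᵥ y) * (starRingEnd ℂ) (χ k))‖^2 : ℝ) : ℂ) :=
    Complex.continuous_ofReal.comp ((hVc.norm).pow 2)
  set gm : C(X, ℂ) := ⟨_, hgc⟩ with hgm
  have hgen := hx gm
  have hre : ∀ n, avgC μ B n (fun t => gm (t +ᵥ x))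
      = ((avg μ B n (fun t =>
          ‖avgC μ B mi (fun k => f (k +ᵥ (t +ᵥ x)) * (starRingEnd ℂ) (χ k))‖^2) : ℝ) : ℂ) :=
    fun n => avgC_ofReal μ B n _
  have hint : (∫ z, gm z ∂m) = ((Wq μ B m mi f χ : ℝ) : ℂ) := integral_ofReal
  have h2 : Tendsto (fun n => (avgC μ B n (fun t => gm (t +ᵥ x))).re) atTop
      (𝓝 ((∫ z, gm z ∂m).re)) := (Complex.continuous_re.tendsto _).comp hgen
  rw [hint] at h2
  simp only [hre, Complex.ofReal_re] at h2
  exact h2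

lemma fb_limsup_le (hB : IsFolner μ B) {x : X} (hx : IsGeneric μ B m x) (f : C(X,ℂ))
    {χ : G → ℂ} (hχ : IsChar χ) (mi : ℕ) {lam : ℝ} (hlam : 0 < lam) :
    limsup (fun n => ‖avgC μ B n (fun t => f (t +ᵥ x) * (starRingEnd ℂ) (χ t))‖) atTop
      ≤ (2*lam)⁻¹ * Wq μ B m mi f χ + lam/2 := by
  classical
  set C := ‖f‖ with hCdef
  have hC0 : 0 ≤ C := norm_nonneg f
  set u : G → ℂ := fun t => f (t +ᵥ x) * (starRingEnd ℂ) (χ t) with hu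
  have huc : Continuous u := orbit_mul_char_cont f x hχ
  have hub : ∀ t, ‖u t‖ ≤ C := fun t => orbit_mul_char_bd f x hχ t
  set V : X → ℂ := fun y => avgC μ B mi (fun k => f (k +ᵥ y) * (starRingEnd ℂ) (χ k)) with hV
  have hVc : Continuous V := continuous_avgC_orbit hB mi f (conj_char_cont hχ) (conj_char_bd hχ)
  have hVb : ∀ y, ‖V y‖ ≤ C := fun y => V_bd hB mi f hχ y
  set v : G → ℂ := fun t => (starRingEnd ℂ) (χ t) * V (t +ᵥ x) with hv
  have hvc : Continuous v := (conj_char_cont hχ).mul (hVc.comp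
    (continuous_vadd.comp (continuous_id.prodMk continuous_const)))
  have hvnorm : ∀ t, ‖v t‖ = ‖V (t +ᵥ x)‖ := by
    intro t
    rw [hv]
    simp only [norm_mul]
    have h1 : ‖(starRingEnd ℂ) (χ t)‖ = 1 := by simp [hχ.2.1 t]
    rw [h1, one_mul]
  have hvb : ∀ t, ‖v t‖ ≤ C := fun t => (hvnorm t) ▸ hVb _
  have claimA : ∀ t, avgC μ B mi (fun k => u (t + k)) = v t := by
    intro t
    have heq : (fun k => u (t + k))
        = fun k => (starRingEnd ℂ) (χ t) * (f (k +ᵥ (t +ᵥ x)) * (starRingEnd ℂ) (χ k)) := by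
      funext k
      rw [hu]
      simp only []
      have h1 : (t + k) +ᵥ x = k +ᵥ (t +ᵥ x) := by rw [vadd_vadd, add_comm]
      rw [h1, hχ.2.2 t k, map_mul]
      ring
    rw [heq, avgC_mul_const]
  haveI hfinBn : ∀ j : ℕ, IsFiniteMeasure (μ.restrict (B j)) := fun j =>
    ⟨by rw [Measure.restrict_apply_univ]; exact hB.meas_lt_top j⟩
  have hUsm : StronglyMeasurable fun p : G × G => u (p.1 + p.2) := by
    have hψ : StronglyMeasurable fun q : G × X => f (q.1 +ᵥ q.2) :=
      (f.continuous.comp continuous_vadd).stronglyMeasurable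
    have hmap : Measurable fun p : G × G => (p.2, p.1 +ᵥ x) := by
      apply Measurable.prodMk measurable_snd
      exact (continuous_id.vadd continuous_const).measurable.comp measurable_fst
    have h1 : StronglyMeasurable fun p : G × G => f (p.2 +ᵥ (p.1 +ᵥ x)) :=
      hψ.comp_measurable hmap
    have h2 : StronglyMeasurable fun p : G × G =>
        f (p.2 +ᵥ (p.1 +ᵥ x)) * ((starRingEnd ℂ) (χ p.1) * (starRingEnd ℂ) (χ p.2)) :=
      h1.mul (((conj_char_cont hχ).stronglyMeasurable.comp_measurable measurable_fst).mul
        ((conj_char_cont hχ).stronglyMeasurable.comp_measurable measurable_snd))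
    have heq : (fun p : G × G => u (p.1 + p.2)) = fun p : G × G =>
        f (p.2 +ᵥ (p.1 +ᵥ x)) * ((starRingEnd ℂ) (χ p.1) * (starRingEnd ℂ) (χ p.2)) := by
      funext p
      rw [hu]
      simp only []
      have hv1 : (p.1 + p.2) +ᵥ x = p.2 +ᵥ (p.1 +ᵥ x) := by rw [vadd_vadd, add_comm]
      rw [hv1, hχ.2.2 p.1 p.2, map_mul]
    rw [heq]
    exact h2
  have hUsm' : StronglyMeasurable fun p : G × G => u (p.2 + p.1) :=
    hUsm.comp_measurable measurable_swap
  have hEsm : ∀ n, StronglyMeasurable fun k : G => avgC μ B n (fun t => u (t + k)) := by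
    intro n
    apply StronglyMeasurable.fun_const_smul
    exact hUsm'.integral_prod_right'
  have hEbd : ∀ n k, ‖avgC μ B n (fun t => u (t + k))‖ ≤ C := by
    intro n k
    exact norm_avgC_le hB n ((huc.comp (continuous_add_right k)).aestronglyMeasurable.restrict)
      (fun t _ => hub _)
  have hAbd : ∀ n, ‖avgC μ B n u‖ ≤ C := fun n =>
    norm_avgC_le hB n (huc.aestronglyMeasurable.restrict) (fun t _ => hub t)
  have claimB : Tendsto (fun n => ‖avgC μ B n u - avgC μ B n v‖) atTop (𝓝 0) := by
    have ident : ∀ n, avgC μ B n u - avgC μ B n v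
        = (μ (B mi)).toReal⁻¹ • ∫ k in B mi,
            (avgC μ B n u - avgC μ B n (fun t => u (t + k))) ∂μ := by
      intro n
      have hswap : ∫ t in B n, (∫ k in B mi, u (t + k) ∂μ) ∂μ
          = ∫ k in B mi, (∫ t in B n, u (t + k) ∂μ) ∂μ := by
        apply integral_integral_swap
        apply Integrable.mono' (integrable_const C)
        · exact hUsm.aestronglyMeasurable
        · exact Eventually.of_forall (fun p => hub _)
      have hveq : avgC μ B n v = (μ (B mi)).toReal⁻¹ •
          ∫ k in B mi, avgC μ B n (fun t => u (t + k)) ∂μ := by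
        have e1 : avgC μ B n v
            = (μ (B n)).toReal⁻¹ • ∫ t in B n,
                ((μ (B mi)).toReal⁻¹ • ∫ k in B mi, u (t + k) ∂μ) ∂μ := by
          rw [avgC]
          congr 1
          apply setIntegral_congr_fun (hB.isOpen n).measurableSet
          intro t _
          rw [← claimA t, avgC]
        rw [e1, integral_smul, hswap]
        rw [smul_comm]
        congr 1
        rw [← integral_smul]
        rfl
      have hconst : avgC μ B n u = (μ (B mi)).toReal⁻¹ •
          ∫ _ in B mi, avgC μ B n u ∂μ := by
        rw [setIntegral_const, measureReal_def, smul_smul, inv_mul_cancel₀ (hB.toReal_pos mi).ne', one_smul]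
      rw [hveq]
      conv_lhs => rw [hconst]
      rw [← smul_sub]
      congr 1
      rw [← integral_sub (integrableOn_const (C := avgC μ B n u) (hB.meas_lt_top mi).ne)]
      apply Integrable.mono' (integrable_const C)
      · exact (hEsm n).aestronglyMeasurable.restrict
      · exact Eventually.of_forall (fun k => hEbd n k)
    have hJ : Tendsto (fun n => ∫ k in B mi,
        ‖avgC μ B n u - avgC μ B n (fun t => u (t + k))‖ ∂μ) atTop (𝓝 0) := by
      have h0 : (0:ℝ) = ∫ (_ : G) in B mi, (0:ℝ) ∂μ := by simp
      rw [h0]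
      apply tendsto_integral_of_dominated_convergence (bound := fun _ => 2*C)
      · intro n
        exact (((stronglyMeasurable_const.sub (hEsm n)).norm).aestronglyMeasurable).restrict
      · exact integrableOn_const (hB.meas_lt_top mi).ne
      · intro n
        refine Eventually.of_forall (fun k => ?_)
        rw [Real.norm_of_nonneg (norm_nonneg _)]
        calc ‖avgC μ B n u - avgC μ B n (fun t => u (t + k))‖
            ≤ ‖avgC μ B n u‖ + ‖avgC μ B n (fun t => u (t + k))‖ := norm_sub_le _ _
          _ ≤ C + C := add_le_add (hAbd n) (hEbd n k)
          _ = 2*C := by ring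
      · refine Eventually.of_forall (fun k => ?_)
        have heqk : (fun t => u (t + k)) = fun t => u (k + t) := by
          funext t; rw [add_comm]
        rw [heqk]
        exact avgC_translate_sub_tendsto hB k huc hub
    have hb : ∀ n, ‖avgC μ B n u - avgC μ B n v‖
        ≤ (μ (B mi)).toReal⁻¹ * ∫ k in B mi,
            ‖avgC μ B n u - avgC μ B n (fun t => u (t + k))‖ ∂μ := by
      intro n
      rw [ident n, norm_smul, Real.norm_of_nonneg (by positivity)]
      exact mul_le_mul_of_nonneg_left (norm_integral_le_integral_norm _) (by positivity)
    have hlim : Tendsto (fun n => (μ (B mi)).toReal⁻¹ * ∫ k in B mi,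
        ‖avgC μ B n u - avgC μ B n (fun t => u (t + k))‖ ∂μ) atTop (𝓝 0) := by
      have := hJ.const_mul ((μ (B mi)).toReal⁻¹)
      simpa using this
    exact squeeze_zero (fun n => norm_nonneg _) hb hlim
  -- assemble
  set b : ℕ → ℝ := fun n => ‖avgC μ B n u - avgC μ B n v‖
      + ((2*lam)⁻¹ * avg μ B n (fun t => ‖V (t +ᵥ x)‖^2) + lam/2) with hb
  have hub_n : ∀ n, ‖avgC μ B n u‖ ≤ b n := by
    intro n
    have t1 : ‖avgC μ B n u‖ ≤ ‖avgC μ B n u - avgC μ B n v‖ + ‖avgC μ B n v‖ := by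
      have := norm_add_le (avgC μ B n u - avgC μ B n v) (avgC μ B n v)
      simpa using this
    have t2 : ‖avgC μ B n v‖ ≤ avg μ B n (fun t => ‖v t‖) := norm_avgC_le_avg_norm v
    have t3 : avg μ B n (fun t => ‖v t‖)
        ≤ (2*lam)⁻¹ * avg μ B n (fun t => ‖v t‖^2) + lam/2 :=
      avg_norm_le_lambda hB n hvc hvb hlam
    have t4 : avg μ B n (fun t => ‖v t‖^2) = avg μ B n (fun t => ‖V (t +ᵥ x)‖^2) := by
      congr 1
      funext t
      rw [hvnorm t]
    rw [hb]
    rw [t4] at t3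
    linarith
  have hbt : Tendsto b atTop (𝓝 (0 + ((2*lam)⁻¹ * Wq μ B m mi f χ + lam/2))) := by
    apply claimB.add
    exact ((tendsto_avg_V_sq hB hx f hχ mi).const_mul _).add_const _
  rw [zero_add] at hbt
  exact le_limsup_of_tendsto_sub hAbd (fun n => norm_nonneg _) hbt hub_n

lemma fb_tendsto_zero (hB : IsFolner μ B) {x : X} (hx : IsGeneric μ B m x) (f : C(X,ℂ))
    {χ : G → ℂ} (hχ : IsChar χ)
    (h0 : ¬ 0 < liminf (fun mi => Wq μ B m mi f χ) atTop) :
    Tendsto (fun n => avgC μ B n (fun t => f (t +ᵥ x) * (starRingEnd ℂ) (χ t))) atTop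
      (𝓝 0) := by
  have hWb : ∀ mi, Wq μ B m mi f χ ≤ ‖f‖^2 := by
    intro mi
    rw [Wq]
    calc ∫ y, ‖avgC μ B mi (fun k => f (k +ᵥ y) * (starRingEnd ℂ) (χ k))‖^2 ∂m
        ≤ ∫ _, (‖f‖^2 : ℝ) ∂m := by
          apply integral_mono ?_ (integrable_const _)
          · intro y
            exact pow_le_pow_left₀ (norm_nonneg _) (V_bd hB mi f hχ y) 2
          · apply Integrable.mono' (integrable_const (‖f‖^2))
            · apply Continuous.aestronglyMeasurable
              exact ((continuous_avgC_orbit hB mi f (conj_char_cont hχ) (conj_char_bd hχ)).norm).pow 2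
            · refine Eventually.of_forall (fun y => ?_)
              rw [Real.norm_of_nonneg (by positivity)]
              exact pow_le_pow_left₀ (norm_nonneg _) (V_bd hB mi f hχ y) 2
      _ = ‖f‖^2 := by simp
  have hlim_le : liminf (fun mi => Wq μ B m mi f χ) atTop ≤ 0 := le_of_not_gt h0
  have hnorm_le : ∀ ε : ℝ, 0 < ε →
      limsup (fun n => ‖avgC μ B n (fun t => f (t +ᵥ x) * (starRingEnd ℂ) (χ t))‖) atTop ≤ ε := by
    intro ε hε
    have hfreq : ∃ mi, Wq μ B m mi f χ < ε^2/2 := by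
      have hcob : IsCoboundedUnder (· ≥ ·) atTop (fun mi => Wq μ B m mi f χ) :=
        (isBoundedUnder_of_le hWb).isCoboundedUnder_flip
      have := frequently_lt_of_liminf_lt hcob
        (lt_of_le_of_lt hlim_le (half_pos (pow_pos hε 2)))
      exact this.exists
    obtain ⟨mi, hmi⟩ := hfreq
    have hkey := fb_limsup_le hB hx f hχ mi (lam := ε/2) (by positivity)
    calc limsup (fun n => ‖avgC μ B n (fun t => f (t +ᵥ x) * (starRingEnd ℂ) (χ t))‖) atTop
        ≤ (2*(ε/2))⁻¹ * Wq μ B m mi f χ + (ε/2)/2 := hkey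
      _ ≤ (2*(ε/2))⁻¹ * (ε^2/2) + (ε/2)/2 := by
          gcongr

      _ ≤ ε := by
          have h2 : (2*(ε/2))⁻¹ * (ε^2/2) = ε/2 := by
            field_simp
          rw [h2]; linarith
  have hlimsup0 : limsup (fun n => ‖avgC μ B n
      (fun t => f (t +ᵥ x) * (starRingEnd ℂ) (χ t))‖) atTop ≤ 0 := by
    refine le_of_forall_pos_le_add (fun ε hε => ?_)
    simpa using hnorm_le ε hε
  rw [tendsto_zero_iff_norm_tendsto_zero]
  apply tendsto_zero_of_limsup_le (fun n => norm_nonneg _) (K := ‖f‖) ?_ hlimsup0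
  intro n
  exact norm_avgC_le hB n ((orbit_mul_char_cont f x hχ).aestronglyMeasurable.restrict)
    (fun t _ => orbit_mul_char_bd f x hχ t)


lemma avgC_finset_sum {ι : Type*} (n : ℕ) (T : Finset ι) (F : ι → G → ℂ)
    (hi : ∀ i ∈ T, IntegrableOn (F i) (B n) μ) :
    avgC μ B n (fun t => ∑ i ∈ T, F i t) = ∑ i ∈ T, avgC μ B n (F i) := by
  rw [avgC, integral_finset_sum T hi, Finset.smul_sum]
  rfl

lemma conj_mul_self_eq_normSq (z : ℂ) : (starRingEnd ℂ) z * z = ((‖z‖^2 : ℝ) : ℂ) := by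
  rw [mul_comm, Complex.mul_conj]
  congr 1
  rw [Complex.sq_norm]

lemma bessel_W (hB : IsFolner μ B) (f : C(X,ℂ)) {δ : ℝ} (hδ : 0 < δ)
    (T : Finset (G → ℂ))
    (hT : ∀ χ ∈ T, IsChar χ ∧ δ ≤ liminf (fun mi => Wq μ B m mi f χ) atTop) :
    (T.card : ℝ) * (δ/2) ≤ ‖f‖^2 + 1 := by
  classical
  set C := ‖f‖ with hCdef
  have hC0 : 0 ≤ C := norm_nonneg f
  set r : ℕ := T.card with hr
  set κ : ℝ := 1/((r:ℝ)^2 * C^2 + 1) with hκ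
  have hκ0 : 0 < κ := by positivity
  have hEv1 : ∀ᶠ mi in atTop, ∀ χ ∈ T, δ/2 < Wq μ B m mi f χ := by
    rw [eventually_all_finset]
    intro χ hχT
    refine eventually_lt_of_lt_liminf (lt_of_lt_of_le (by linarith) (hT χ hχT).2) ?_
    exact isBoundedUnder_of ⟨0, fun mi => Wq_nonneg mi f χ⟩
  have hEv2 : ∀ᶠ mi in atTop, ∀ χ ∈ T, ∀ η ∈ T, χ ≠ η →
      ‖avgC μ B mi (fun k => χ k * (starRingEnd ℂ) (η k))‖ < κ := by
    rw [eventually_all_finset]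
    intro χ hχT
    rw [eventually_all_finset]
    intro η hηT
    by_cases hne : χ = η
    · exact Eventually.of_forall (fun mi h => absurd hne h)
    · have h0 := (char_orth hB (hT χ hχT).1 (hT η hηT).1 hne).norm
      rw [norm_zero] at h0
      exact (h0.eventually_lt_const hκ0).mono (fun mi h _ => h)
  obtain ⟨mi, hmi1, hmi2⟩ := (hEv1.and hEv2).exists
  have stageA : ∀ y : X,
      (∑ χ ∈ T, ‖avgC μ B mi (fun k => f (k +ᵥ y) * (starRingEnd ℂ) (χ k))‖^2)
        ≤ C^2 + 1 := by
    intro y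
    set bb : (G → ℂ) → ℂ :=
      fun χ => avgC μ B mi (fun k => f (k +ᵥ y) * (starRingEnd ℂ) (χ k)) with hbb
    set β : ℝ := ∑ χ ∈ T, ‖bb χ‖^2 with hβ
    have hβ0 : 0 ≤ β := Finset.sum_nonneg (fun _ _ => by positivity)
    have hbbd : ∀ χ ∈ T, ‖bb χ‖ ≤ C := fun χ hχT => V_bd hB mi f (hT χ hχT).1 y
    set g : G → ℂ := fun k => ∑ χ ∈ T, bb χ * χ k with hg
    have hgc : Continuous g :=
      continuous_finset_sum T (fun χ hχT => continuous_const.mul (hT χ hχT).1.1)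
    have hgb : ∀ k, ‖g k‖ ≤ (r:ℝ) * C := by
      intro k
      calc ‖g k‖ ≤ ∑ χ ∈ T, ‖bb χ * χ k‖ := norm_sum_le _ _
        _ ≤ ∑ _χ ∈ T, C := by
            apply Finset.sum_le_sum
            intro χ hχT
            rw [norm_mul, (hT χ hχT).1.2.1 k, mul_one]
            exact hbbd χ hχT
        _ = (r:ℝ) * C := by rw [Finset.sum_const, hr, nsmul_eq_mul]
    have hId1 : avgC μ B mi (fun k => f (k +ᵥ y) * (starRingEnd ℂ) (g k)) = (β : ℂ) := by
      have he : (fun k => f (k +ᵥ y) * (starRingEnd ℂ) (g k))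
          = fun k => ∑ χ ∈ T,
              (starRingEnd ℂ) (bb χ) * (f (k +ᵥ y) * (starRingEnd ℂ) (χ k)) := by
        funext k
        rw [hg]
        simp only [map_sum, map_mul, Finset.mul_sum]
        exact Finset.sum_congr rfl (fun χ _ => by ring)
      rw [he, avgC_finset_sum mi T _ (fun χ hχT => ?hint1)]
      case hint1 =>
        apply hB.integrableOn mi (continuous_const.mul (orbit_mul_char_cont f y (hT χ hχT).1))
          (C * C)
        intro k
        simp only [Pi.mul_apply]
        rw [norm_mul]
        have h1 : ‖(starRingEnd ℂ) (bb χ)‖ = ‖bb χ‖ := RCLike.norm_conj _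
        rw [h1]
        exact mul_le_mul (hbbd χ hχT) (orbit_mul_char_bd f y (hT χ hχT).1 k)
          (norm_nonneg _) hC0
      calc ∑ χ ∈ T, avgC μ B mi
            (fun k => (starRingEnd ℂ) (bb χ) * (f (k +ᵥ y) * (starRingEnd ℂ) (χ k)))
          = ∑ χ ∈ T, (starRingEnd ℂ) (bb χ) * bb χ :=
            Finset.sum_congr rfl (fun χ _ => avgC_mul_const _ _)
        _ = ∑ χ ∈ T, ((‖bb χ‖^2 : ℝ) : ℂ) :=
            Finset.sum_congr rfl (fun χ _ => conj_mul_self_eq_normSq _)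
        _ = (β : ℂ) := by rw [hβ]; norm_cast
    have hfcg_cont : Continuous fun k => f (k +ᵥ y) * (starRingEnd ℂ) (g k) :=
      (continuous_orbit f y).mul (Complex.continuous_conj.comp hgc)
    have hfcg_bd : ∀ k, ‖f (k +ᵥ y) * (starRingEnd ℂ) (g k)‖ ≤ C * ((r:ℝ) * C) := by
      intro k
      rw [norm_mul, RCLike.norm_conj]
      exact mul_le_mul (f.norm_coe_le_norm _) (hgb k) (norm_nonneg _) hC0
    have hB1 : β ≤ avg μ B mi (fun k => ‖f (k +ᵥ y) * (starRingEnd ℂ) (g k)‖) := by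
      have hbeq : β = ‖avgC μ B mi (fun k => f (k +ᵥ y) * (starRingEnd ℂ) (g k))‖ := by
        rw [hId1]
        rw [Complex.norm_real]
        exact (abs_of_nonneg hβ0).symm
      rw [hbeq]
      exact norm_avgC_le_avg_norm _
    have hB2 : avg μ B mi (fun k => ‖f (k +ᵥ y) * (starRingEnd ℂ) (g k)‖)
        ≤ C^2/2 + (1/2) * avg μ B mi (fun k => ‖g k‖^2) + 0 := by
      have hpt : ∀ k, ‖f (k +ᵥ y) * (starRingEnd ℂ) (g k)‖
          ≤ C^2/2 + (1/2) * ‖g k‖^2 := by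
        intro k
        rw [norm_mul, RCLike.norm_conj]
        nlinarith [f.norm_coe_le_norm (k +ᵥ y), norm_nonneg (g k),
          norm_nonneg (f (k +ᵥ y)), sq_nonneg (‖f (k +ᵥ y)‖ - ‖g k‖), hC0]
      have hi1 : IntegrableOn (fun k => ‖f (k +ᵥ y) * (starRingEnd ℂ) (g k)‖) (B mi) μ :=
        hB.integrableOn mi hfcg_cont.norm (C * ((r:ℝ)*C))
          (fun k => by rw [norm_norm]; exact hfcg_bd k)
      have hi2 : IntegrableOn (fun k => C^2/2 + (1/2) * ‖g k‖^2) (B mi) μ := by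
        apply hB.integrableOn mi (by fun_prop) (C^2/2 + (1/2) * ((r:ℝ)*C)^2)
        intro k
        rw [Real.norm_of_nonneg (by positivity)]
        have h2 : ‖g k‖^2 ≤ ((r:ℝ)*C)^2 := pow_le_pow_left₀ (norm_nonneg _) (hgb k) 2
        nlinarith
      have := avg_mono hB hi1 hi2 (fun k _ => hpt k)
      have hsplit : avg μ B mi (fun k => C^2/2 + (1/2) * ‖g k‖^2)
          = C^2/2 + (1/2) * avg μ B mi (fun k => ‖g k‖^2) := by
        have hia : IntegrableOn (fun _ : G => C^2/2) (B mi) μ :=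
          integrableOn_const (hB.meas_lt_top mi).ne
        have hib : IntegrableOn (fun k => (1/2) * ‖g k‖^2) (B mi) μ := by
          apply hB.integrableOn mi (by fun_prop) ((1/2) * ((r:ℝ)*C)^2)
          intro k
          rw [Real.norm_of_nonneg (by positivity)]
          have h2 : ‖g k‖^2 ≤ ((r:ℝ)*C)^2 := pow_le_pow_left₀ (norm_nonneg _) (hgb k) 2
          nlinarith
        rw [avg_add hia hib, avg_const hB, avg_smul]
      rw [hsplit] at this
      linarith
    have hGm_int : ∀ χ ∈ T, ∀ η ∈ T, IntegrableOn
        (fun k => (bb χ * (starRingEnd ℂ) (bb η)) * (χ k * (starRingEnd ℂ) (η k)))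
        (B mi) μ := by
      intro χ hχT η hηT
      apply hB.integrableOn mi
        (continuous_const.mul ((hT χ hχT).1.1.mul (conj_char_cont (hT η hηT).1)))
        ((C*C) * 1)
      intro k
      simp only [Pi.mul_apply]
      rw [norm_mul, norm_mul, norm_mul, RCLike.norm_conj, RCLike.norm_conj,
        (hT χ hχT).1.2.1 k, (hT η hηT).1.2.1 k]
      apply mul_le_mul _ (by norm_num) (by positivity) (by positivity)
      exact mul_le_mul (hbbd χ hχT) (hbbd η hηT) (norm_nonneg _) hC0
    have hId2 : ((avg μ B mi (fun k => ‖g k‖^2) : ℝ) : ℂ)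
        = (β : ℂ) + ∑ χ ∈ T, ∑ η ∈ T.erase χ, (bb χ * (starRingEnd ℂ) (bb η))
            * avgC μ B mi (fun k => χ k * (starRingEnd ℂ) (η k)) := by
      rw [← avgC_ofReal]
      have he : (fun k => ((‖g k‖^2 : ℝ) : ℂ)) = fun k => ∑ χ ∈ T,
          ∑ η ∈ T, (bb χ * (starRingEnd ℂ) (bb η)) * (χ k * (starRingEnd ℂ) (η k)) := by
        funext k
        have h1 : ((‖g k‖^2 : ℝ) : ℂ) = (starRingEnd ℂ) (g k) * g k :=
          (conj_mul_self_eq_normSq _).symm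
        rw [h1, hg]
        simp only [map_sum, map_mul]
        rw [Finset.sum_mul_sum, Finset.sum_comm]
        apply Finset.sum_congr rfl
        intro χ _
        apply Finset.sum_congr rfl
        intro η _
        ring
      rw [he]
      rw [avgC_finset_sum mi T _ (fun χ hχT =>
        integrable_finset_sum T (fun η hηT => hGm_int χ hχT η hηT))]
      have hinner : ∀ χ ∈ T, avgC μ B mi (fun k => ∑ η ∈ T,
          (bb χ * (starRingEnd ℂ) (bb η)) * (χ k * (starRingEnd ℂ) (η k)))
          = ∑ η ∈ T, (bb χ * (starRingEnd ℂ) (bb η))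
              * avgC μ B mi (fun k => χ k * (starRingEnd ℂ) (η k)) := by
        intro χ hχT
        rw [avgC_finset_sum mi T _ (fun η hηT => hGm_int χ hχT η hηT)]
        exact Finset.sum_congr rfl (fun η _ => avgC_mul_const _ _)
      rw [Finset.sum_congr rfl hinner]
      have hsplit : ∀ χ ∈ T, (∑ η ∈ T, (bb χ * (starRingEnd ℂ) (bb η))
            * avgC μ B mi (fun k => χ k * (starRingEnd ℂ) (η k)))
          = ((‖bb χ‖^2 : ℝ) : ℂ) + ∑ η ∈ T.erase χ, (bb χ * (starRingEnd ℂ) (bb η))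
              * avgC μ B mi (fun k => χ k * (starRingEnd ℂ) (η k)) := by
        intro χ hχT
        rw [← Finset.add_sum_erase T _ hχT]
        congr 1
        rw [char_diag hB (hT χ hχT).1, mul_one, mul_comm]
        exact conj_mul_self_eq_normSq _
      rw [Finset.sum_congr rfl hsplit, Finset.sum_add_distrib]
      congr 1
      rw [hβ]
      norm_cast
    have hB3 : avg μ B mi (fun k => ‖g k‖^2) ≤ β + 1 := by
      have hre := congrArg Complex.re hId2
      rw [Complex.ofReal_re, Complex.add_re, Complex.ofReal_re] at hre
      have hoff : (∑ χ ∈ T, ∑ η ∈ T.erase χ, (bb χ * (starRingEnd ℂ) (bb η))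
          * avgC μ B mi (fun k => χ k * (starRingEnd ℂ) (η k))).re ≤ 1 := by
        have hnorm : ‖∑ χ ∈ T, ∑ η ∈ T.erase χ, (bb χ * (starRingEnd ℂ) (bb η))
            * avgC μ B mi (fun k => χ k * (starRingEnd ℂ) (η k))‖ ≤ 1 := by
          calc ‖∑ χ ∈ T, ∑ η ∈ T.erase χ, (bb χ * (starRingEnd ℂ) (bb η))
              * avgC μ B mi (fun k => χ k * (starRingEnd ℂ) (η k))‖
              ≤ ∑ χ ∈ T, ‖∑ η ∈ T.erase χ, (bb χ * (starRingEnd ℂ) (bb η))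
                * avgC μ B mi (fun k => χ k * (starRingEnd ℂ) (η k))‖ := norm_sum_le _ _
            _ ≤ ∑ _χ ∈ T, (r:ℝ) * (C * C * κ) := by
                apply Finset.sum_le_sum
                intro χ hχT
                calc ‖∑ η ∈ T.erase χ, (bb χ * (starRingEnd ℂ) (bb η))
                    * avgC μ B mi (fun k => χ k * (starRingEnd ℂ) (η k))‖
                    ≤ ∑ η ∈ T.erase χ, ‖(bb χ * (starRingEnd ℂ) (bb η))
                      * avgC μ B mi (fun k => χ k * (starRingEnd ℂ) (η k))‖ :=
                      norm_sum_le _ _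
                  _ ≤ ∑ _η ∈ T.erase χ, C * C * κ := by
                      apply Finset.sum_le_sum
                      intro η hηT
                      have hηT' : η ∈ T := Finset.mem_of_mem_erase hηT
                      have hne : χ ≠ η := (Finset.ne_of_mem_erase hηT).symm
                      rw [norm_mul, norm_mul, RCLike.norm_conj]
                      calc ‖bb χ‖ * ‖bb η‖
                          * ‖avgC μ B mi (fun k => χ k * (starRingEnd ℂ) (η k))‖
                          ≤ (C * C) * κ := by
                            apply mul_le_mul _ (hmi2 χ hχT η hηT' hne).le (norm_nonneg _)
                              (by positivity)
                            exact mul_le_mul (hbbd χ hχT) (hbbd η hηT') (norm_nonneg _) hC0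
                        _ = C * C * κ := by ring
                  _ ≤ (r:ℝ) * (C * C * κ) := by
                      rw [Finset.sum_const, nsmul_eq_mul]
                      apply mul_le_mul_of_nonneg_right _ (by positivity)
                      exact_mod_cast Finset.card_erase_le.trans (le_of_eq hr.symm)
            _ = (r:ℝ) * ((r:ℝ) * (C * C * κ)) := by
                rw [Finset.sum_const, hr, nsmul_eq_mul]
            _ ≤ 1 := by
                have h1 : (0:ℝ) < (r:ℝ)^2 * C^2 + 1 := by positivity
                have h2 : (r:ℝ) * ((r:ℝ) * (C * C * κ))
                    = ((r:ℝ)^2*C^2) * (1/((r:ℝ)^2 * C^2 + 1)) := by rw [hκ]; ring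
                rw [h2, mul_one_div, div_le_one h1]
                linarith
        calc (∑ χ ∈ T, ∑ η ∈ T.erase χ, (bb χ * (starRingEnd ℂ) (bb η))
            * avgC μ B mi (fun k => χ k * (starRingEnd ℂ) (η k))).re
            ≤ ‖(∑ χ ∈ T, ∑ η ∈ T.erase χ, (bb χ * (starRingEnd ℂ) (bb η))
              * avgC μ B mi (fun k => χ k * (starRingEnd ℂ) (η k)))‖ := Complex.re_le_norm _
          _ ≤ 1 := by exact hnorm
      linarith [hre]
    linarith
  have hWint : ∀ χ ∈ T, Integrable (fun y =>
      ‖avgC μ B mi (fun k => f (k +ᵥ y) * (starRingEnd ℂ) (χ k))‖^2) m := by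
    intro χ hχT
    apply Integrable.mono' (integrable_const (C^2))
    · exact (((continuous_avgC_orbit hB mi f (conj_char_cont (hT χ hχT).1)
        (conj_char_bd (hT χ hχT).1)).norm).pow 2).aestronglyMeasurable
    · refine Eventually.of_forall (fun y => ?_)
      rw [Real.norm_of_nonneg (by positivity)]
      exact pow_le_pow_left₀ (norm_nonneg _) (V_bd hB mi f (hT χ hχT).1 y) 2
  have hsum : ∑ χ ∈ T, Wq μ B m mi f χ ≤ C^2 + 1 := by
    have h1 : ∑ χ ∈ T, Wq μ B m mi f χ = ∫ y, (∑ χ ∈ T,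
        ‖avgC μ B mi (fun k => f (k +ᵥ y) * (starRingEnd ℂ) (χ k))‖^2) ∂m :=
      (integral_finset_sum T hWint).symm
    rw [h1]
    calc ∫ y, (∑ χ ∈ T,
        ‖avgC μ B mi (fun k => f (k +ᵥ y) * (starRingEnd ℂ) (χ k))‖^2) ∂m
        ≤ ∫ _, (C^2 + 1 : ℝ) ∂m :=
          integral_mono (integrable_finset_sum T hWint) (integrable_const _) stageA
      _ = C^2 + 1 := by simp
  have hlow : (r:ℝ) * (δ/2) ≤ ∑ χ ∈ T, Wq μ B m mi f χ := by
    have h2 := Finset.card_nsmul_le_sum T (fun χ => Wq μ B m mi f χ) (δ/2)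
      (fun χ hχT => (hmi1 χ hχT).le)
    rwa [nsmul_eq_mul, ← hr] at h2
  calc (T.card : ℝ) * (δ/2) = (r:ℝ) * (δ/2) := by rw [hr]
    _ ≤ ∑ χ ∈ T, Wq μ B m mi f χ := hlow
    _ ≤ C^2 + 1 := hsum
    _ = ‖f‖^2 + 1 := by rw [hCdef]

lemma finite_high_W (hB : IsFolner μ B) (f : C(X,ℂ)) {δ : ℝ} (hδ : 0 < δ) :
    {χ : G → ℂ | IsChar χ ∧ δ ≤ liminf (fun mi => Wq μ B m mi f χ) atTop}.Finite := by
  by_contra hinf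
  obtain ⟨T, hTsub, hTcard⟩ := Set.Infinite.exists_subset_card_eq hinf
    (⌈(2*(‖f‖^2+1))/δ⌉₊ + 1)
  have hkey := bessel_W hB f hδ T (fun χ hχT => hTsub hχT)
  rw [hTcard] at hkey
  have h1 : ((2*(‖f‖^2+1))/δ : ℝ) < ((⌈(2*(‖f‖^2+1))/δ⌉₊ + 1 : ℕ) : ℝ) := by
    push_cast
    calc ((2*(‖f‖^2+1))/δ : ℝ) ≤ (⌈(2*(‖f‖^2+1))/δ⌉₊ : ℝ) := Nat.le_ceil _
      _ < (⌈(2*(‖f‖^2+1))/δ⌉₊ : ℝ) + 1 := by linarith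
  have h2 : (0:ℝ) < δ/2 := by linarith
  have h3 : ((2*(‖f‖^2+1))/δ) * (δ/2) < ((⌈(2*(‖f‖^2+1))/δ⌉₊ + 1 : ℕ) : ℝ) * (δ/2) :=
    mul_lt_mul_of_pos_right h1 h2
  have h4 : ((2*(‖f‖^2+1))/δ) * (δ/2) = ‖f‖^2 + 1 := by
    field_simp
  rw [h4] at h3
  linarith

/-- The countable set of relevant characters for `f`. -/
def Sset (μ : Measure G) (B : ℕ → Set G) (m : Measure X) (f : C(X,ℂ)) : Set (G → ℂ) :=
  {χ | IsChar χ ∧ 0 < liminf (fun mi => Wq μ B m mi f χ) atTop}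

lemma Sset_countable (hB : IsFolner μ B) (f : C(X,ℂ)) :
    (Sset (X := X) μ B m f).Countable := by
  have hsub : Sset (X := X) μ B m f ⊆ ⋃ i : ℕ,
      {χ : G → ℂ | IsChar χ ∧ 1/(i+1) ≤ liminf (fun mi => Wq μ B m mi f χ) atTop} := by
    rintro χ ⟨h1, h2⟩
    obtain ⟨i, hi⟩ := exists_nat_one_div_lt h2
    exact mem_iUnion.2 ⟨i, h1, by exact_mod_cast hi.le⟩
  refine Set.Countable.mono hsub ?_
  refine countable_iUnion (fun i => Set.Finite.countable ?_)
  exact finite_high_W hB f (by positivity)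

end MainEst

section Trig
variable {G : Type*} [AddCommGroup G] [TopologicalSpace G]

lemma trivialChar : IsChar (fun _ : G => (1:ℂ)) :=
  ⟨continuous_const, fun _ => by norm_num, fun _ _ => by norm_num⟩

lemma span_const (c : ℂ) :
    (fun _ : G => c) ∈ Submodule.span ℂ {χ : G → ℂ | IsChar χ} := by
  have h1 : (fun _ : G => (1:ℂ)) ∈ {χ : G → ℂ | IsChar χ} := trivialChar
  have h2 : (fun _ : G => c) = c • (fun _ : G => (1:ℂ)) := by
    funext t; simp
  rw [h2]
  exact Submodule.smul_mem _ c (Submodule.subset_span h1)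

lemma span_char_mul {a b : G → ℂ}
    (ha : a ∈ Submodule.span ℂ {χ : G → ℂ | IsChar χ})
    (hb : b ∈ Submodule.span ℂ {χ : G → ℂ | IsChar χ}) :
    a * b ∈ Submodule.span ℂ {χ : G → ℂ | IsChar χ} := by
  induction ha using Submodule.span_induction with
  | mem χ hχ =>
    induction hb using Submodule.span_induction with
    | mem η hη => exact Submodule.subset_span (IsChar.mul hχ hη)
    | zero => rw [mul_zero]; exact Submodule.zero_mem _
    | add y z _ _ hy hz => rw [mul_add]; exact Submodule.add_mem _ hy hz
    | smul c y _ hy => rw [mul_smul_comm]; exact Submodule.smul_mem _ c hy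
  | zero => rw [zero_mul]; exact Submodule.zero_mem _
  | add y z _ _ hy hz => rw [add_mul]; exact Submodule.add_mem _ hy hz
  | smul c y _ hy => rw [smul_mul_assoc]; exact Submodule.smul_mem _ c hy

lemma span_char_conj {a : G → ℂ}
    (ha : a ∈ Submodule.span ℂ {χ : G → ℂ | IsChar χ}) :
    (fun t => (starRingEnd ℂ) (a t)) ∈ Submodule.span ℂ {χ : G → ℂ | IsChar χ} := by
  induction ha using Submodule.span_induction with
  | mem χ hχ => exact Submodule.subset_span (IsChar.conj hχ)
  | zero =>
    have : (fun t : G => (starRingEnd ℂ) ((0 : G → ℂ) t)) = 0 := by funext t; simp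
    rw [this]; exact Submodule.zero_mem _
  | add y z _ _ hy hz =>
    have : (fun t : G => (starRingEnd ℂ) ((y + z) t))
        = (fun t => (starRingEnd ℂ) (y t)) + fun t => (starRingEnd ℂ) (z t) := by
      funext t; simp
    rw [this]; exact Submodule.add_mem _ hy hz
  | smul c y _ hy =>
    have : (fun t : G => (starRingEnd ℂ) ((c • y) t))
        = (starRingEnd ℂ) c • fun t => (starRingEnd ℂ) (y t) := by
      funext t; simp
    rw [this]; exact Submodule.smul_mem _ _ hy

/-- Clipping of a complex number to the closed ball of radius `R`. -/
def clipC (R : ℝ) (z : ℂ) : ℂ := (R / max R ‖z‖) • z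

lemma clipC_cont {R : ℝ} (hR : 0 < R) : Continuous (clipC R) := by
  apply Continuous.fun_smul _ continuous_id
  apply Continuous.div continuous_const (continuous_const.max continuous_norm)
  intro z
  have : R ≤ max R ‖z‖ := le_max_left _ _
  positivity

lemma clipC_norm_le {R : ℝ} (hR : 0 < R) (z : ℂ) : ‖clipC R z‖ ≤ R := by
  rw [clipC, norm_smul, Real.norm_of_nonneg (by positivity)]
  rw [div_mul_eq_mul_div, div_le_iff₀ (lt_of_lt_of_le hR (le_max_left _ _))]
  nlinarith [le_max_right R ‖z‖, hR.le]

lemma clipC_close {R : ℝ} (hR : 0 < R) {w z : ℂ} (hw : ‖w‖ ≤ R) :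
    ‖w - clipC R z‖ ≤ 2 * ‖w - z‖ := by
  rcases le_or_gt ‖z‖ R with h | h
  · have h1 : clipC R z = z := by
      rw [clipC, max_eq_left h]
      rcases eq_or_ne R 0 with h0 | h0
      · simp [h0] at hR
      · rw [div_self h0, one_smul]
    rw [h1]
    nlinarith [norm_nonneg (w - z)]
  · have h1 : max R ‖z‖ = ‖z‖ := max_eq_right h.le
    have hz0 : ‖z‖ ≠ 0 := ne_of_gt (lt_trans hR h)
    have h2 : ‖z - clipC R z‖ = ‖z‖ - R := by
      rw [clipC, h1]
      have h3 : z - (R / ‖z‖) • z = ((‖z‖ - R)/‖z‖) • z := by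
        rw [sub_div, div_self hz0, sub_smul, one_smul]
      rw [h3, norm_smul, Real.norm_of_nonneg (div_nonneg (by linarith) (norm_nonneg z))]
      rw [div_mul_eq_mul_div, mul_div_assoc, div_self hz0, mul_one]
    have h4 : ‖z‖ - R ≤ ‖w - z‖ := by
      have h6 : ‖z‖ - ‖w‖ ≤ ‖z - w‖ := norm_sub_norm_le z w
      rw [norm_sub_rev] at h6
      linarith
    calc ‖w - clipC R z‖ ≤ ‖w - z‖ + ‖z - clipC R z‖ := by
          have := norm_add_le (w - z) (z - clipC R z)
          simpa using this
      _ = ‖w - z‖ + (‖z‖ - R) := by rw [h2]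
      _ ≤ 2 * ‖w - z‖ := by linarith

lemma exists_trig_approx {k : ℕ} (ξ : Fin k → G → ℂ) (hξ : ∀ j, IsChar (ξ j))
    (h : (Fin k → ℂ) → ℂ) (hh : Continuous h) {ε : ℝ} (hε : 0 < ε) :
    ∃ P ∈ Submodule.span ℂ {χ : G → ℂ | IsChar χ},
      ∀ t : G, ‖h (fun j => ξ j t) - P t‖ ≤ ε := by
  classical
  set Φ : G → (Fin k → ℂ) := fun t j => ξ j t with hΦ
  set K : Set (Fin k → ℂ) := closure (Set.range Φ) with hK
  have hKcpt : IsCompact K := by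
    have hsub : K ⊆ Set.pi Set.univ (fun _ : Fin k => Metric.closedBall (0:ℂ) 1) := by
      apply closure_minimal
      · rintro _ ⟨t, rfl⟩
        intro j _
        simp only [Metric.mem_closedBall, dist_zero_right]
        exact ((hξ j).2.1 t).le
      · exact isClosed_set_pi (fun j _ => Metric.isClosed_closedBall)
    exact IsCompact.of_isClosed_subset
      (isCompact_univ_pi (fun _ => isCompact_closedBall _ _)) isClosed_closure hsub
  haveI : CompactSpace ↥K := isCompact_iff_compactSpace.1 hKcpt
  set coord : Fin k → C(↥K, ℂ) := fun j => ⟨fun v => (v : Fin k → ℂ) j,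
    (continuous_apply j).comp continuous_subtype_val⟩ with hcoord
  set A : StarSubalgebra ℂ C(↥K, ℂ) := StarAlgebra.adjoin ℂ (Set.range coord) with hA
  have hsep : A.SeparatesPoints := by
    intro v w hvw
    have hne : ∃ j, (v : Fin k → ℂ) j ≠ (w : Fin k → ℂ) j := by
      by_contra hcon
      push_neg at hcon
      exact hvw (Subtype.ext (funext hcon))
    obtain ⟨j, hj⟩ := hne
    exact ⟨_, ⟨coord j, StarAlgebra.subset_adjoin ℂ _ (Set.mem_range_self j), rfl⟩, hj⟩
  have htop := ContinuousMap.starSubalgebra_topologicalClosure_eq_top_of_separatesPoints A hsep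
  set hKf : C(↥K, ℂ) := ⟨fun v => h (v : Fin k → ℂ), hh.comp continuous_subtype_val⟩ with hhKf
  have hmemcl : hKf ∈ closure (A : Set C(↥K, ℂ)) := by
    have : hKf ∈ A.topologicalClosure := by rw [htop]; trivial
    exact this
  obtain ⟨p, hpA, hdist⟩ := Metric.mem_closure_iff.1 hmemcl ε hε
  have hΦmem : ∀ t : G, Φ t ∈ K := fun t => subset_closure (Set.mem_range_self t)
  refine ⟨fun t => p ⟨Φ t, hΦmem t⟩, ?_, ?_⟩
  · -- pull back membership by adjoin induction
    have : ∀ (q : C(↥K, ℂ)), q ∈ A →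
        (fun t : G => q ⟨Φ t, hΦmem t⟩) ∈ Submodule.span ℂ {χ : G → ℂ | IsChar χ} := by
      intro q hq
      induction hq using StarAlgebra.adjoin_induction with
      | mem g hg =>
        obtain ⟨j, rfl⟩ := hg
        exact Submodule.subset_span (hξ j)
      | algebraMap c => exact span_const c
      | add y z _ _ hy hz =>
        have heq : (fun t : G => (y + z) ⟨Φ t, hΦmem t⟩)
            = (fun t : G => y ⟨Φ t, hΦmem t⟩) + fun t : G => z ⟨Φ t, hΦmem t⟩ := by
          funext t; simp
        rw [heq]; exact Submodule.add_mem _ hy hz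
      | mul y z _ _ hy hz =>
        have heq : (fun t : G => (y * z) ⟨Φ t, hΦmem t⟩)
            = (fun t : G => y ⟨Φ t, hΦmem t⟩) * fun t : G => z ⟨Φ t, hΦmem t⟩ := by
          funext t; simp
        rw [heq]; exact span_char_mul hy hz
      | star y _ hy =>
        have heq : (fun t : G => (star y) ⟨Φ t, hΦmem t⟩)
            = fun t : G => (starRingEnd ℂ) (y ⟨Φ t, hΦmem t⟩) := by
          funext t
          simp [ContinuousMap.star_apply, RCLike.star_def]
        rw [heq]; exact span_char_conj hy
    exact this p hpA
  · intro t
    have h1 : ‖h (fun j => ξ j t) - p ⟨Φ t, hΦmem t⟩‖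
        = dist (hKf ⟨Φ t, hΦmem t⟩) (p ⟨Φ t, hΦmem t⟩) := by
      rw [dist_eq_norm]; rfl
    rw [h1]
    exact le_trans (ContinuousMap.dist_apply_le_dist _) hdist.le

end Trig

lemma mul_conj_self_eq_normSq (z : ℂ) : z * (starRingEnd ℂ) z = ((‖z‖^2 : ℝ) : ℂ) := by
  rw [mul_comm]; exact conj_mul_self_eq_normSq z

lemma norm_add_sq_complex (a b : ℂ) :
    ‖a + b‖^2 = ‖a‖^2 + 2 * (a * (starRingEnd ℂ) b).re + ‖b‖^2 := by
  have h1 : ∀ z : ℂ, ‖z‖^2 = Complex.normSq z := by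
    intro z; rw [Complex.sq_norm]
  rw [h1, h1, h1, Complex.normSq_add]
  ring

lemma exists_rat_complex_near (z : ℂ) {δ : ℝ} (hδ : 0 < δ) :
    ∃ p : ℚ × ℚ, ‖z - ((p.1 : ℝ) + (p.2 : ℝ) * Complex.I)‖ ≤ δ := by
  obtain ⟨a, ha⟩ := exists_rat_near z.re (half_pos hδ)
  obtain ⟨b, hb⟩ := exists_rat_near z.im (half_pos hδ)
  refine ⟨(a, b), ?_⟩
  set w : ℂ := ((a : ℝ) : ℂ) + ((b : ℝ) : ℂ) * Complex.I with hw
  have hre : (z - w).re = z.re - (a : ℝ) := by simp [hw]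
  have him : (z - w).im = z.im - (b : ℝ) := by simp [hw]
  calc ‖z - w‖ = ‖z - w‖ := rfl
    _ ≤ |(z - w).re| + |(z - w).im| := Complex.norm_le_abs_re_add_abs_im _
    _ ≤ δ/2 + δ/2 := by
        rw [hre, him]
        exact add_le_add ha.le hb.le
    _ = δ := by ring

section MainEst2
variable {G : Type*} [AddCommGroup G] [TopologicalSpace G] [IsTopologicalAddGroup G] [T2Space G]
  [LocallyCompactSpace G] [SigmaCompactSpace G] [MeasurableSpace G] [BorelSpace G]
  {μ : Measure G} [μ.IsAddHaarMeasure] {B : ℕ → Set G}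
  {X : Type*} [MetricSpace X] [CompactSpace X] [MeasurableSpace X] [BorelSpace X]
  [AddAction G X] [ContinuousVAdd G X] {m : Measure X} [IsProbabilityMeasure m]

lemma conj_comp_cont {Z : Type*} [TopologicalSpace Z] {g : Z → ℂ} (hg : Continuous g) :
    Continuous fun s => (starRingEnd ℂ) (g s) := Complex.continuous_conj.comp hg

lemma avg_re (hB : IsFolner μ B) (n : ℕ) {F : G → ℂ} (hi : IntegrableOn F (B n) μ) :
    avg μ B n (fun t => (F t).re) = (avgC μ B n F).re := by
  have h := integral_re (μ := μ.restrict (B n)) hi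
  simp only [RCLike.re_to_complex] at h
  rw [avg, avgC, h, Complex.real_smul, Complex.mul_re]
  simp

open scoped Classical in
lemma tendsto_avgC_prod_sums (hB : IsFolner μ B) (T1 T2 : Finset (G → ℂ))
    (d1 d2 : (G → ℂ) → ℂ) (h1 : ∀ χ ∈ T1, IsChar χ) (h2 : ∀ χ ∈ T2, IsChar χ) :
    Tendsto (fun n => avgC μ B n (fun s =>
        (∑ η ∈ T1, d1 η * η s) * (starRingEnd ℂ) (∑ χ ∈ T2, d2 χ * χ s))) atTop
      (𝓝 (∑ η ∈ T1, ∑ χ ∈ T2, if η = χ then d1 η * (starRingEnd ℂ) (d2 χ) else 0)) := by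
  classical
  have hint : ∀ (η : G → ℂ), η ∈ T1 → ∀ (χ : G → ℂ), χ ∈ T2 → ∀ n : ℕ, IntegrableOn
      (fun s => (d1 η * (starRingEnd ℂ) (d2 χ)) * (η s * (starRingEnd ℂ) (χ s)))
      (B n) μ := by
    intro η hη χ hχ n
    apply hB.integrableOn n (continuous_const.mul ((h1 η hη).1.mul (conj_char_cont (h2 χ hχ))))
      (‖d1 η * (starRingEnd ℂ) (d2 χ)‖ * 1)
    intro s
    simp only [Pi.mul_apply]
    rw [norm_mul]
    apply mul_le_mul_of_nonneg_left _ (norm_nonneg _)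
    rw [norm_mul, RCLike.norm_conj, (h1 η hη).2.1 s, (h2 χ hχ).2.1 s, mul_one]
  have hexp : ∀ n, avgC μ B n (fun s =>
      (∑ η ∈ T1, d1 η * η s) * (starRingEnd ℂ) (∑ χ ∈ T2, d2 χ * χ s))
      = ∑ η ∈ T1, ∑ χ ∈ T2, (d1 η * (starRingEnd ℂ) (d2 χ))
          * avgC μ B n (fun s => η s * (starRingEnd ℂ) (χ s)) := by
    intro n
    have he : (fun s => (∑ η ∈ T1, d1 η * η s) * (starRingEnd ℂ) (∑ χ ∈ T2, d2 χ * χ s))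
        = fun s => ∑ η ∈ T1, ∑ χ ∈ T2,
            (d1 η * (starRingEnd ℂ) (d2 χ)) * (η s * (starRingEnd ℂ) (χ s)) := by
      funext s
      rw [map_sum, Finset.sum_mul_sum]
      apply Finset.sum_congr rfl
      intro η _
      apply Finset.sum_congr rfl
      intro χ _
      rw [map_mul]
      ring
    rw [he, avgC_finset_sum n T1 _ (fun η hη => integrable_finset_sum T2
      (fun χ hχ => hint η hη χ hχ n))]
    apply Finset.sum_congr rfl
    intro η hη
    rw [avgC_finset_sum n T2 _ (fun χ hχ => hint η hη χ hχ n)]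
    exact Finset.sum_congr rfl (fun χ _ => avgC_mul_const _ _)
  simp only [hexp]
  apply tendsto_finset_sum
  intro η hη
  apply tendsto_finset_sum
  intro χ hχ
  by_cases heq : η = χ
  · subst heq
    simp only [if_pos rfl]
    have hconst : ∀ n, (d1 η * (starRingEnd ℂ) (d2 η))
        * avgC μ B n (fun s => η s * (starRingEnd ℂ) (η s))
        = d1 η * (starRingEnd ℂ) (d2 η) := by
      intro n
      rw [char_diag hB (h1 η hη), mul_one]
    simp only [hconst]
    exact tendsto_const_nhds
  · simp only [if_neg heq]
    have := (char_orth hB (h1 η hη) (h2 χ hχ) heq).const_mul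
      (d1 η * (starRingEnd ℂ) (d2 χ))
    simpa using this


lemma avg_affine (hB : IsFolner μ B) (n : ℕ) (a b : ℝ) {F : G → ℝ}
    (hi : IntegrableOn F (B n) μ) :
    avg μ B n (fun s => a * F s + b) = a * avg μ B n F + b := by
  rw [avg_add (hi.const_mul a) (integrableOn_const (hB.meas_lt_top n).ne),
    avg_smul, avg_const hB]

set_option maxHeartbeats 2000000 in
open scoped Classical in
lemma cleaning (hB : IsFolner μ B) {x : X} (hx : IsGeneric μ B m x) (f : C(X,ℂ))
    (hbes : BesicovitchAPFun μ B (fun t : G => f (t +ᵥ x))) {q : ℝ} (hq : 0 < q) :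
    ∃ (kk : ℕ) (σ : Fin kk → G → ℂ) (c : Fin kk → ℚ × ℚ),
      (∀ j, σ j ∈ Sset (X := X) μ B m f) ∧
      upperMean μ B (fun s => ‖f (s +ᵥ x)
        - ∑ j, (((c j).1 : ℝ) + ((c j).2 : ℝ) * Complex.I) * σ j s‖) < q := by
  have hfxc : Continuous fun s : G => f (s +ᵥ x) := continuous_orbit f x
  set C : ℝ := ‖f‖ + 1 with hCdef
  have hC0 : 0 < C := by positivity
  have hC1 : (1:ℝ) ≤ C := by
    have := norm_nonneg f
    rw [hCdef]; linarith
  have hfxb : ∀ s : G, ‖f (s +ᵥ x)‖ ≤ C := by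
    intro s
    have := f.norm_coe_le_norm (s +ᵥ x)
    rw [hCdef]; linarith
  set ε : ℝ := min 1 (q^2 / (160 * C)) with hεdef
  have hε0 : 0 < ε := lt_min one_pos (div_pos (pow_pos hq 2) (by positivity))
  have hε1 : ε ≤ 1 := min_le_left _ _
  have hε2 : ε ≤ q^2 / (160 * C) := min_le_right _ _
  obtain ⟨k, ξ, cc, hξ, herr⟩ := hbes ε hε0
  set K0 : ℝ := ∑ j, ‖cc j‖ with hK0def
  have hP0c : Continuous fun s : G => ∑ j, cc j * ξ j s :=
    continuous_finset_sum _ (fun j _ => continuous_const.mul (hξ j).1)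
  have hP0b : ∀ s : G, ‖∑ j, cc j * ξ j s‖ ≤ K0 := by
    intro s
    calc ‖∑ j, cc j * ξ j s‖ ≤ ∑ j, ‖cc j * ξ j s‖ := norm_sum_le _ _
      _ = ∑ j, ‖cc j‖ := by
          apply Finset.sum_congr rfl
          intro j _
          rw [norm_mul, (hξ j).2.1 s, mul_one]
  -- Stone–Weierstrass approximation of the clipped polynomial
  have hfunc : Continuous fun v : Fin k → ℂ => clipC C (∑ j, cc j * v j) :=
    (clipC_cont hC0).comp (continuous_finset_sum _
      (fun j _ => continuous_const.mul (continuous_apply j)))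
  obtain ⟨P', hP's, hP'c⟩ := exists_trig_approx ξ hξ _ hfunc hε0
  have hPcP' : ∀ s : G, ‖clipC C (∑ j, cc j * ξ j s) - P' s‖ ≤ ε := fun s => hP'c s
  have hPcclose : ∀ s : G, ‖f (s +ᵥ x) - clipC C (∑ j, cc j * ξ j s)‖
      ≤ 2 * ‖f (s +ᵥ x) - ∑ j, cc j * ξ j s‖ := fun s => clipC_close hC0 (hfxb s)
  have hPcb : ∀ s : G, ‖clipC C (∑ j, cc j * ξ j s)‖ ≤ C := fun s => clipC_norm_le hC0 _
  -- representation of P' over distinct characters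
  obtain ⟨co, hsupp, hrep⟩ := Submodule.mem_span_set.1 hP's
  set T : Finset (G → ℂ) := co.support with hTdef
  set d : (G → ℂ) → ℂ := fun χ => co χ with hddef
  have hTchar : ∀ χ ∈ T, IsChar χ := fun χ hmem => hsupp hmem
  have hP'eq : ∀ s, P' s = ∑ χ ∈ T, d χ * χ s := by
    intro s
    rw [← hrep]
    rw [Finsupp.sum]
    rw [Finset.sum_apply]
    apply Finset.sum_congr rfl
    intro χ _
    simp [hddef]
  set KP : ℝ := ∑ χ ∈ T, ‖d χ‖ with hKPdef
  have hsumb : ∀ (S : Finset (G → ℂ)), S ⊆ T → ∀ s : G, ‖∑ χ ∈ S, d χ * χ s‖ ≤ KP := by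
    intro S hS s
    calc ‖∑ χ ∈ S, d χ * χ s‖ ≤ ∑ χ ∈ S, ‖d χ * χ s‖ := norm_sum_le _ _
      _ = ∑ χ ∈ S, ‖d χ‖ := by
          apply Finset.sum_congr rfl
          intro χ hχ
          rw [norm_mul, (hTchar χ (hS hχ)).2.1 s, mul_one]
      _ ≤ KP := Finset.sum_le_sum_of_subset_of_nonneg hS (fun _ _ _ => norm_nonneg _)
  have hsumc : ∀ (S : Finset (G → ℂ)), S ⊆ T →
      Continuous fun s : G => ∑ χ ∈ S, d χ * χ s := by
    intro S hS
    exact continuous_finset_sum _ (fun χ hχ => continuous_const.mul (hTchar χ (hS hχ)).1)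
  have hP'b : ∀ s, ‖P' s‖ ≤ KP := by
    intro s; rw [hP'eq s]; exact hsumb T (subset_refl T) s
  set p : (G → ℂ) → Prop := fun χ => 0 < liminf (fun mi => Wq μ B m mi f χ) atTop with hpdef
  set Tg : Finset (G → ℂ) := T.filter p with hTgdef
  set Tb : Finset (G → ℂ) := T.filter (fun χ => ¬ p χ) with hTbdef
  have hTgsub : Tg ⊆ T := Finset.filter_subset _ _
  have hTbsub : Tb ⊆ T := Finset.filter_subset _ _
  have hQR : ∀ s, (∑ χ ∈ Tg, d χ * χ s) + (∑ χ ∈ Tb, d χ * χ s) = P' s := by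
    intro s
    rw [hP'eq s, hTgdef, hTbdef]
    exact Finset.sum_filter_add_sum_filter_not T p _
  have hTgood : ∀ χ ∈ Tg, χ ∈ Sset (X := X) μ B m f := by
    intro χ hχ
    exact ⟨hTchar χ (hTgsub hχ), (Finset.mem_filter.1 hχ).2⟩
  have hbad : ∀ χ ∈ Tb, Tendsto (fun n => avgC μ B n
      (fun s => f (s +ᵥ x) * (starRingEnd ℂ) (χ s))) atTop (𝓝 0) := by
    intro χ hχ
    exact fb_tendsto_zero hB hx f (hTchar χ (hTbsub hχ)) (Finset.mem_filter.1 hχ).2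
  set rr : ℝ := ∑ χ ∈ Tb, ‖d χ‖^2 with hrrdef
  have hrr0 : 0 ≤ rr := Finset.sum_nonneg (fun _ _ => by positivity)
  -- limits of the correction terms
  have hL2 : Tendsto (fun n => avgC μ B n (fun s =>
      (∑ η ∈ Tb, d η * η s) * (starRingEnd ℂ) (∑ χ ∈ Tb, d χ * χ s))) atTop
      (𝓝 ((rr : ℝ) : ℂ)) := by
    have h := tendsto_avgC_prod_sums hB Tb Tb d d (fun χ hχ => hTchar χ (hTbsub hχ))
      (fun χ hχ => hTchar χ (hTbsub hχ))
    have hsum1 : (∑ η ∈ Tb, ∑ χ ∈ Tb, if η = χ then d η * (starRingEnd ℂ) (d χ) else 0)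
        = ((rr : ℝ) : ℂ) := by
      have h1 : ∀ η ∈ Tb, (∑ χ ∈ Tb, if η = χ then d η * (starRingEnd ℂ) (d χ) else 0)
          = ((‖d η‖^2 : ℝ) : ℂ) := by
        intro η hη
        rw [Finset.sum_ite_eq Tb η (fun χ => d η * (starRingEnd ℂ) (d χ)), if_pos hη,
          mul_conj_self_eq_normSq]
      rw [Finset.sum_congr rfl h1, hrrdef]
      norm_cast
    rwa [hsum1] at h
  have hL1b : Tendsto (fun n => avgC μ B n (fun s =>
      (∑ η ∈ T, d η * η s) * (starRingEnd ℂ) (∑ χ ∈ Tb, d χ * χ s))) atTop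
      (𝓝 ((rr : ℝ) : ℂ)) := by
    have h := tendsto_avgC_prod_sums hB T Tb d d hTchar
      (fun χ hχ => hTchar χ (hTbsub hχ))
    have hsum1 : (∑ η ∈ T, ∑ χ ∈ Tb, if η = χ then d η * (starRingEnd ℂ) (d χ) else 0)
        = ((rr : ℝ) : ℂ) := by
      have h1 : ∀ η ∈ T, (∑ χ ∈ Tb, if η = χ then d η * (starRingEnd ℂ) (d χ) else 0)
          = if η ∈ Tb then ((‖d η‖^2 : ℝ) : ℂ) else 0 := by
        intro η _
        rw [Finset.sum_ite_eq Tb η (fun χ => d η * (starRingEnd ℂ) (d χ))]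
        by_cases hmem : η ∈ Tb
        · rw [if_pos hmem, if_pos hmem, mul_conj_self_eq_normSq]
        · rw [if_neg hmem, if_neg hmem]
      rw [Finset.sum_congr rfl h1, Finset.sum_ite_mem,
        Finset.inter_eq_right.2 hTbsub, hrrdef]
      norm_cast
    rwa [hsum1] at h
  have hintfχ : ∀ χ ∈ T, ∀ n : ℕ, IntegrableOn
      (fun s => f (s +ᵥ x) * (starRingEnd ℂ) (χ s)) (B n) μ := by
    intro χ hχ n
    exact hB.integrableOn n (orbit_mul_char_cont f x (hTchar χ hχ)) ‖f‖
      (fun s => orbit_mul_char_bd f x (hTchar χ hχ) s)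
  have hL1a : Tendsto (fun n => avgC μ B n (fun s =>
      f (s +ᵥ x) * (starRingEnd ℂ) (∑ χ ∈ Tb, d χ * χ s))) atTop (𝓝 0) := by
    have hexp : ∀ n, avgC μ B n (fun s =>
        f (s +ᵥ x) * (starRingEnd ℂ) (∑ χ ∈ Tb, d χ * χ s))
        = ∑ χ ∈ Tb, (starRingEnd ℂ) (d χ)
            * avgC μ B n (fun s => f (s +ᵥ x) * (starRingEnd ℂ) (χ s)) := by
      intro n
      have he : (fun s => f (s +ᵥ x) * (starRingEnd ℂ) (∑ χ ∈ Tb, d χ * χ s))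
          = fun s => ∑ χ ∈ Tb, (starRingEnd ℂ) (d χ)
              * (f (s +ᵥ x) * (starRingEnd ℂ) (χ s)) := by
        funext s
        rw [map_sum, Finset.mul_sum]
        apply Finset.sum_congr rfl
        intro χ _
        rw [map_mul]
        ring
      rw [he, avgC_finset_sum n Tb _ (fun χ hχ => ?_)]
      · exact Finset.sum_congr rfl (fun χ _ => avgC_mul_const _ _)
      · apply Integrable.const_mul
        exact hintfχ χ (hTbsub hχ) n
    simp only [hexp]
    have h0 : (0 : ℂ) = ∑ χ ∈ Tb, (starRingEnd ℂ) (d χ) * 0 := by simp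
    rw [h0]
    apply tendsto_finset_sum
    intro χ hχ
    exact (hbad χ hχ).const_mul _
  have hdiff : Tendsto (fun n => avgC μ B n (fun s =>
      (f (s +ᵥ x) - P' s) * (starRingEnd ℂ) (∑ χ ∈ Tb, d χ * χ s))) atTop
      (𝓝 (0 - ((rr : ℝ) : ℂ))) := by
    have heqn : ∀ n, avgC μ B n (fun s =>
        (f (s +ᵥ x) - P' s) * (starRingEnd ℂ) (∑ χ ∈ Tb, d χ * χ s))
        = avgC μ B n (fun s => f (s +ᵥ x) * (starRingEnd ℂ) (∑ χ ∈ Tb, d χ * χ s))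
          - avgC μ B n (fun s =>
              (∑ η ∈ T, d η * η s) * (starRingEnd ℂ) (∑ χ ∈ Tb, d χ * χ s)) := by
      intro n
      rw [← avgC_sub]
      · congr 1
        funext s
        rw [← hP'eq s]
        ring
      · apply hB.integrableOn n (hfxc.mul (conj_comp_cont (hsumc Tb hTbsub))) (C * KP)
        intro s
        simp only [Pi.mul_apply]
        rw [norm_mul, RCLike.norm_conj]
        exact mul_le_mul (hfxb s) (hsumb Tb hTbsub s) (norm_nonneg _) hC0.le
      · apply hB.integrableOn n ((hsumc T (subset_refl T)).mul
          (conj_comp_cont (hsumc Tb hTbsub))) (KP * KP)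
        intro s
        simp only [Pi.mul_apply]
        rw [norm_mul, RCLike.norm_conj]
        exact mul_le_mul (hsumb T (subset_refl T) s) (hsumb Tb hTbsub s) (norm_nonneg _)
          (le_trans (norm_nonneg _) (hsumb T (subset_refl T) 0))
    simp only [heqn]
    exact hL1a.sub hL1b
  -- continuity and bounds
  have hKP0 : 0 ≤ KP := Finset.sum_nonneg (fun _ _ => norm_nonneg _)
  have hP'cont : Continuous P' := by
    rw [show P' = fun s => ∑ χ ∈ T, d χ * χ s from funext hP'eq]
    exact hsumc T (subset_refl T)
  have hQcont : Continuous fun s : G => ∑ χ ∈ Tg, d χ * χ s := hsumc Tg hTgsub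
  have hRcont : Continuous fun s : G => ∑ χ ∈ Tb, d χ * χ s := hsumc Tb hTbsub
  have hfmQc : Continuous fun s : G => f (s +ᵥ x) - ∑ χ ∈ Tg, d χ * χ s := hfxc.sub hQcont
  have hfmQb : ∀ s, ‖f (s +ᵥ x) - ∑ χ ∈ Tg, d χ * χ s‖ ≤ C + KP := fun s =>
    le_trans (norm_sub_le _ _) (add_le_add (hfxb s) (hsumb Tg hTgsub s))
  have hfmP'c : Continuous fun s : G => f (s +ᵥ x) - P' s := hfxc.sub hP'cont
  have hfmP'b : ∀ s, ‖f (s +ᵥ x) - P' s‖ ≤ C + KP := fun s =>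
    le_trans (norm_sub_le _ _) (add_le_add (hfxb s) (hP'b s))
  have havg_le : ∀ (F : G → ℝ) (KF : ℝ), Continuous F → (∀ s, |F s| ≤ KF) →
      ∀ n, avg μ B n F ≤ KF := by
    intro F KF hFc hFb n
    exact (abs_le.1 (abs_avg_le hB n (hFc.aestronglyMeasurable.restrict)
      (fun s _ => hFb s))).2
  -- the three pieces
  have hFcross : Continuous fun s : G =>
      (f (s +ᵥ x) - P' s) * (starRingEnd ℂ) (∑ χ ∈ Tb, d χ * χ s) :=
    hfmP'c.mul (conj_comp_cont hRcont)
  have hFcross_b : ∀ s, ‖(f (s +ᵥ x) - P' s)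
      * (starRingEnd ℂ) (∑ χ ∈ Tb, d χ * χ s)‖ ≤ (C + KP) * KP := by
    intro s
    rw [norm_mul, RCLike.norm_conj]
    exact mul_le_mul (hfmP'b s) (hsumb Tb hTbsub s) (norm_nonneg _) (by positivity)
  have hFcross_int : ∀ n, IntegrableOn (fun s =>
      (f (s +ᵥ x) - P' s) * (starRingEnd ℂ) (∑ χ ∈ Tb, d χ * χ s)) (B n) μ := fun n =>
    hB.integrableOn n hFcross ((C + KP) * KP) hFcross_b
  have hRR_int : ∀ n, IntegrableOn (fun s =>
      (∑ η ∈ Tb, d η * η s) * (starRingEnd ℂ) (∑ χ ∈ Tb, d χ * χ s)) (B n) μ := by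
    intro n
    apply hB.integrableOn n (hRcont.mul (conj_comp_cont hRcont)) (KP * KP)
    intro s
    simp only [Pi.mul_apply]
    rw [norm_mul, RCLike.norm_conj]
    exact mul_le_mul (hsumb Tb hTbsub s) (hsumb Tb hTbsub s) (norm_nonneg _) hKP0
  set aF : G → ℝ := fun s => ‖f (s +ᵥ x) - P' s‖^2 with haF
  set bF : G → ℝ := fun s => 2 * (((f (s +ᵥ x) - P' s)
    * (starRingEnd ℂ) (∑ χ ∈ Tb, d χ * χ s)).re) with hbF
  set cF : G → ℝ := fun s => ‖∑ χ ∈ Tb, d χ * χ s‖^2 with hcF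
  have hia : ∀ n, IntegrableOn aF (B n) μ := by
    intro n
    apply hB.integrableOn n (by rw [haF]; exact hfmP'c.norm.pow 2) ((C + KP)^2)
    intro s
    rw [haF]
    show ‖‖f (s +ᵥ x) - P' s‖^2‖ ≤ (C + KP)^2
    rw [Real.norm_of_nonneg (by positivity)]
    exact pow_le_pow_left₀ (norm_nonneg _) (hfmP'b s) 2
  have hib : ∀ n, IntegrableOn bF (B n) μ := by
    intro n
    apply hB.integrableOn n
      (by rw [hbF]; exact continuous_const.mul (Complex.continuous_re.comp hFcross))
      (2 * ((C + KP) * KP))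
    intro s
    rw [hbF]
    show ‖2 * (((f (s +ᵥ x) - P' s) * (starRingEnd ℂ) (∑ χ ∈ Tb, d χ * χ s)).re)‖
      ≤ 2 * ((C + KP) * KP)
    rw [Real.norm_eq_abs, abs_mul, abs_two]
    apply mul_le_mul_of_nonneg_left _ (by norm_num)
    calc |((f (s +ᵥ x) - P' s) * (starRingEnd ℂ) (∑ χ ∈ Tb, d χ * χ s)).re|
        ≤ ‖((f (s +ᵥ x) - P' s) * (starRingEnd ℂ) (∑ χ ∈ Tb, d χ * χ s))‖ :=
          Complex.abs_re_le_norm _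
      _ ≤ (C + KP) * KP := by exact hFcross_b s
  have hic : ∀ n, IntegrableOn cF (B n) μ := by
    intro n
    apply hB.integrableOn n (by rw [hcF]; exact hRcont.norm.pow 2) (KP^2)
    intro s
    rw [hcF]
    show ‖‖∑ χ ∈ Tb, d χ * χ s‖^2‖ ≤ KP^2
    rw [Real.norm_of_nonneg (by positivity)]
    exact pow_le_pow_left₀ (norm_nonneg _) (hsumb Tb hTbsub s) 2
  have hdecomp : ∀ n, avg μ B n (fun s => ‖f (s +ᵥ x) - ∑ χ ∈ Tg, d χ * χ s‖^2)
      = avg μ B n aF + avg μ B n bF + avg μ B n cF := by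
    intro n
    have heq : (fun s => ‖f (s +ᵥ x) - ∑ χ ∈ Tg, d χ * χ s‖^2)
        = fun s => (aF s + bF s) + cF s := by
      funext s
      rw [haF, hbF, hcF]
      show ‖f (s +ᵥ x) - ∑ χ ∈ Tg, d χ * χ s‖^2
        = (‖f (s +ᵥ x) - P' s‖^2
            + 2 * (((f (s +ᵥ x) - P' s)
              * (starRingEnd ℂ) (∑ χ ∈ Tb, d χ * χ s)).re))
          + ‖∑ χ ∈ Tb, d χ * χ s‖^2
      have h1 : f (s +ᵥ x) - ∑ χ ∈ Tg, d χ * χ s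
          = (f (s +ᵥ x) - P' s) + ∑ χ ∈ Tb, d χ * χ s := by
        rw [← hQR s]; ring
      rw [h1, norm_add_sq_complex]
    have hiab : IntegrableOn (fun s => aF s + bF s) (B n) μ := (hia n).add (hib n)
    rw [heq, avg_add hiab (hic n), avg_add (hia n) (hib n)]
  have hbNlim : Tendsto (fun n => avg μ B n bF) atTop (𝓝 (-(2 * rr))) := by
    have h1 : ∀ n, avg μ B n bF
        = 2 * ((avgC μ B n (fun s => (f (s +ᵥ x) - P' s)
            * (starRingEnd ℂ) (∑ χ ∈ Tb, d χ * χ s))).re) := by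
      intro n
      rw [hbF, avg_smul, avg_re hB n (hFcross_int n)]
    simp only [h1]
    have h2 := ((Complex.continuous_re.tendsto _).comp hdiff).const_mul (2:ℝ)
    have h3 : (2:ℝ) * ((0 - ((rr : ℝ) : ℂ)).re) = -(2 * rr) := by simp
    rw [h3] at h2
    exact h2
  have hcNlim : Tendsto (fun n => avg μ B n cF) atTop (𝓝 rr) := by
    have h1 : ∀ n, avg μ B n cF
        = (avgC μ B n (fun s => (∑ η ∈ Tb, d η * η s)
            * (starRingEnd ℂ) (∑ χ ∈ Tb, d χ * χ s))).re := by
      intro n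
      have heq2 : cF = fun s => ((∑ η ∈ Tb, d η * η s)
          * (starRingEnd ℂ) (∑ χ ∈ Tb, d χ * χ s)).re := by
        funext s
        rw [hcF]
        show ‖∑ χ ∈ Tb, d χ * χ s‖^2 = _
        rw [mul_conj_self_eq_normSq]
        exact (Complex.ofReal_re _).symm
      rw [heq2, avg_re hB n (hRR_int n)]
    simp only [h1]
    have h2 := (Complex.continuous_re.tendsto _).comp hL2
    simpa [Function.comp_def] using h2
  set GF : G → ℝ := fun s => ‖f (s +ᵥ x) - ∑ j, cc j * ξ j s‖ with hGF
  have hGFint : ∀ n, IntegrableOn GF (B n) μ := by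
    intro n
    apply hB.integrableOn n (by rw [hGF]; exact (hfxc.sub hP0c).norm) (C + K0)
    intro s
    rw [hGF]
    show ‖‖f (s +ᵥ x) - ∑ j, cc j * ξ j s‖‖ ≤ C + K0
    rw [norm_norm]
    exact le_trans (norm_sub_le _ _) (add_le_add (hfxb s) (hP0b s))
  have haN : ∀ n, avg μ B n aF ≤ 6*C * avg μ B n GF + 3*C*ε := by
    intro n
    have hpt : ∀ s, aF s ≤ 6*C * GF s + 3*C*ε := by
      intro s
      rw [haF, hGF]
      show ‖f (s +ᵥ x) - P' s‖^2 ≤ 6*C*‖f (s +ᵥ x) - ∑ j, cc j * ξ j s‖ + 3*C*ε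
      have n1 : ‖f (s +ᵥ x) - P' s‖ ≤ 2*‖f (s +ᵥ x) - ∑ j, cc j * ξ j s‖ + ε := by
        calc ‖f (s +ᵥ x) - P' s‖
            ≤ ‖f (s +ᵥ x) - clipC C (∑ j, cc j * ξ j s)‖
              + ‖clipC C (∑ j, cc j * ξ j s) - P' s‖ := by
              have h0 := norm_add_le (f (s +ᵥ x) - clipC C (∑ j, cc j * ξ j s))
                (clipC C (∑ j, cc j * ξ j s) - P' s)
              simpa using h0
          _ ≤ 2*‖f (s +ᵥ x) - ∑ j, cc j * ξ j s‖ + ε := add_le_add (hPcclose s) (hPcP' s)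
      have n2 : ‖f (s +ᵥ x) - P' s‖ ≤ 3*C := by
        calc ‖f (s +ᵥ x) - P' s‖
            ≤ ‖f (s +ᵥ x) - clipC C (∑ j, cc j * ξ j s)‖
              + ‖clipC C (∑ j, cc j * ξ j s) - P' s‖ := by
              have h0 := norm_add_le (f (s +ᵥ x) - clipC C (∑ j, cc j * ξ j s))
                (clipC C (∑ j, cc j * ξ j s) - P' s)
              simpa using h0
          _ ≤ (C + C) + ε := by
              apply add_le_add _ (hPcP' s)
              exact le_trans (norm_sub_le _ _) (add_le_add (hfxb s) (hPcb s))
          _ ≤ 3*C := by linarith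
      have n3 : ‖f (s +ᵥ x) - P' s‖ * ‖f (s +ᵥ x) - P' s‖
          ≤ (3*C) * (2*‖f (s +ᵥ x) - ∑ j, cc j * ξ j s‖ + ε) :=
        mul_le_mul n2 n1 (norm_nonneg _) (by positivity)
      calc ‖f (s +ᵥ x) - P' s‖^2 = ‖f (s +ᵥ x) - P' s‖ * ‖f (s +ᵥ x) - P' s‖ := sq _
        _ ≤ (3*C) * (2*‖f (s +ᵥ x) - ∑ j, cc j * ξ j s‖ + ε) := n3
        _ = 6*C*‖f (s +ᵥ x) - ∑ j, cc j * ξ j s‖ + 3*C*ε := by ring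
    have hint2 : IntegrableOn (fun s => 6*C * GF s + 3*C*ε) (B n) μ :=
      ((hGFint n).const_mul _).add (integrableOn_const (hB.meas_lt_top n).ne)
    calc avg μ B n aF ≤ avg μ B n (fun s => 6*C * GF s + 3*C*ε) :=
          avg_mono hB (hia n) hint2 (fun s _ => hpt s)
      _ = 6*C * avg μ B n GF + 3*C*ε := avg_affine hB n _ _ (hGFint n)
  -- limsup of the squared error
  have hubnd : ∀ n, avg μ B n (fun s => ‖f (s +ᵥ x) - ∑ χ ∈ Tg, d χ * χ s‖^2)
      ≤ (C + KP)^2 := by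
    intro n
    apply havg_le _ _ (hfmQc.norm.fun_pow 2)
    intro s
    rw [abs_of_nonneg (by positivity)]
    exact pow_le_pow_left₀ (norm_nonneg _) (hfmQb s) 2
  have hu0 : ∀ n, 0 ≤ avg μ B n (fun s => ‖f (s +ᵥ x) - ∑ χ ∈ Tg, d χ * χ s‖^2) :=
    fun n => avg_nonneg (fun s => by positivity)
  have hbnd0 : ∀ n, avg μ B n GF ≤ C + K0 := by
    intro n
    apply havg_le _ _ (by rw [hGF]; exact (hfxc.sub hP0c).norm)
    intro s
    rw [hGF]
    show |‖f (s +ᵥ x) - ∑ j, cc j * ξ j s‖| ≤ C + K0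
    rw [abs_of_nonneg (norm_nonneg _)]
    exact le_trans (norm_sub_le _ _) (add_le_add (hfxb s) (hP0b s))
  have hlimsup_u : limsup (fun n => avg μ B n
      (fun s => ‖f (s +ᵥ x) - ∑ χ ∈ Tg, d χ * χ s‖^2)) atTop ≤ 9*C*ε := by
    apply real_limsup_le_of_pos hu0
    intro θ hθ
    have hEv1 : ∀ᶠ n in atTop, avg μ B n GF < ε := by
      have herr2 : limsup (fun n => avg μ B n GF) atTop < ε := by
        rw [hGF]; exact herr
      exact eventually_lt_of_limsup_lt herr2 (isBoundedUnder_of_le hbnd0)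
    have hEv2 : ∀ᶠ n in atTop,
        avg μ B n bF + avg μ B n cF < -(2*rr) + rr + θ := by
      apply (hbNlim.add hcNlim).eventually_lt_const
      linarith
    filter_upwards [hEv1, hEv2] with n h1 h2
    rw [hdecomp n]
    have h3 : avg μ B n aF ≤ 6*C*ε + 3*C*ε := by
      have := haN n
      nlinarith [this, h1, hC0]
    nlinarith [h3, h2, hrr0]
  -- first-power error via the λ-trick
  have hw : ∀ n, avg μ B n (fun s => ‖f (s +ᵥ x) - ∑ χ ∈ Tg, d χ * χ s‖)
      ≤ (2*(q/4))⁻¹ * avg μ B n (fun s => ‖f (s +ᵥ x) - ∑ χ ∈ Tg, d χ * χ s‖^2)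
        + (q/4)/2 := fun n =>
    avg_norm_le_lambda hB n hfmQc hfmQb (by positivity)
  have hwbnd : ∀ n, avg μ B n (fun s => ‖f (s +ᵥ x) - ∑ χ ∈ Tg, d χ * χ s‖) ≤ C + KP := by
    intro n
    apply havg_le _ _ (hfmQc.norm)
    intro s
    rw [abs_of_nonneg (norm_nonneg _)]
    exact hfmQb s
  have hw0 : ∀ n, 0 ≤ avg μ B n (fun s => ‖f (s +ᵥ x) - ∑ χ ∈ Tg, d χ * χ s‖) :=
    fun n => avg_nonneg (fun s => norm_nonneg _)
  have hlimsup_w : limsup (fun n => avg μ B n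
      (fun s => ‖f (s +ᵥ x) - ∑ χ ∈ Tg, d χ * χ s‖)) atTop
      ≤ (2*(q/4))⁻¹ * (9*C*ε) + (q/4)/2 := by
    apply real_limsup_le_of_pos hw0
    intro θ hθ
    have hEvU : ∀ᶠ n in atTop,
        avg μ B n (fun s => ‖f (s +ᵥ x) - ∑ χ ∈ Tg, d χ * χ s‖^2)
          < 9*C*ε + θ * (2*(q/4)) :=
      eventually_le_of_limsup_le hubnd hlimsup_u (by positivity)
    filter_upwards [hEvU] with n h1
    have h2 := hw n
    have h3 : (2*(q/4))⁻¹ * avg μ B n (fun s => ‖f (s +ᵥ x) - ∑ χ ∈ Tg, d χ * χ s‖^2)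
        ≤ (2*(q/4))⁻¹ * (9*C*ε + θ * (2*(q/4))) := by
      apply mul_le_mul_of_nonneg_left h1.le (by positivity)
    have h4 : (2*(q/4))⁻¹ * (9*C*ε + θ * (2*(q/4)))
        = (2*(q/4))⁻¹ * (9*C*ε) + θ := by
      field_simp
    linarith
  have hnum : (2*(q/4))⁻¹ * (9*C*ε) + (q/4)/2 ≤ 9*q/80 + q/8 := by
    have h2l : (2*(q/4)) = q/2 := by ring
    have hinv : ((q:ℝ)/2)⁻¹ = 2/q := by
      rw [inv_div]
    have h5 : (2/q)*(9*C*ε) ≤ (2/q)*(9*C*(q^2/(160*C))) := by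
      apply mul_le_mul_of_nonneg_left _ (by positivity)
      apply mul_le_mul_of_nonneg_left hε2 (by positivity)
    have h6 : (2/q)*(9*C*(q^2/(160*C))) = 9*q/80 := by
      field_simp
      ring
    rw [h2l, hinv]
    have h7 : (q/4)/2 = q/8 := by ring
    rw [h7]
    linarith
  -- rationalisation of the coefficients
  set δr : ℝ := q/(4*((Tg.card : ℝ)+1)) with hδrdef
  have hδr : 0 < δr := by positivity
  set c' : (G → ℂ) → ℚ × ℚ :=
    fun χ => Classical.choose (exists_rat_complex_near (d χ) hδr) with hc'def
  have hc' : ∀ χ, ‖d χ - (((c' χ).1 : ℝ) + ((c' χ).2 : ℝ) * Complex.I)‖ ≤ δr :=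
    fun χ => Classical.choose_spec (exists_rat_complex_near (d χ) hδr)
  have hQQ' : ∀ s : G, ‖(∑ χ ∈ Tg, d χ * χ s)
      - ∑ χ ∈ Tg, (((c' χ).1 : ℝ) + ((c' χ).2 : ℝ) * Complex.I) * χ s‖ ≤ q/4 := by
    intro s
    rw [← Finset.sum_sub_distrib]
    calc ‖∑ χ ∈ Tg, (d χ * χ s
        - (((c' χ).1 : ℝ) + ((c' χ).2 : ℝ) * Complex.I) * χ s)‖
        ≤ ∑ χ ∈ Tg, ‖d χ * χ s
          - (((c' χ).1 : ℝ) + ((c' χ).2 : ℝ) * Complex.I) * χ s‖ := norm_sum_le _ _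
      _ ≤ ∑ _χ ∈ Tg, δr := by
          apply Finset.sum_le_sum
          intro χ hχ
          have heq3 : d χ * χ s - (((c' χ).1 : ℝ) + ((c' χ).2 : ℝ) * Complex.I) * χ s
              = (d χ - (((c' χ).1 : ℝ) + ((c' χ).2 : ℝ) * Complex.I)) * χ s := by ring
          rw [heq3, norm_mul, (hTchar χ (hTgsub hχ)).2.1 s, mul_one]
          exact hc' χ
      _ = (Tg.card : ℝ) * δr := by rw [Finset.sum_const, nsmul_eq_mul]
      _ ≤ q/4 := by
          rw [hδrdef]
          have h0 : (0:ℝ) ≤ (Tg.card:ℝ) := Nat.cast_nonneg _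
          have h1 : (0:ℝ) < 4*((Tg.card:ℝ) + 1) := by positivity
          rw [← mul_div_assoc, div_le_div_iff₀ h1 (by norm_num : (0:ℝ) < 4)]
          nlinarith [hq.le]
  have hfinal_pt : ∀ s : G, ‖f (s +ᵥ x)
      - ∑ χ ∈ Tg, (((c' χ).1 : ℝ) + ((c' χ).2 : ℝ) * Complex.I) * χ s‖
      ≤ ‖f (s +ᵥ x) - ∑ χ ∈ Tg, d χ * χ s‖ + q/4 := by
    intro s
    calc ‖f (s +ᵥ x) - ∑ χ ∈ Tg, (((c' χ).1 : ℝ) + ((c' χ).2 : ℝ) * Complex.I) * χ s‖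
        ≤ ‖f (s +ᵥ x) - ∑ χ ∈ Tg, d χ * χ s‖ + ‖(∑ χ ∈ Tg, d χ * χ s)
            - ∑ χ ∈ Tg, (((c' χ).1 : ℝ) + ((c' χ).2 : ℝ) * Complex.I) * χ s‖ := by
          have h0 := norm_add_le (f (s +ᵥ x) - ∑ χ ∈ Tg, d χ * χ s)
            ((∑ χ ∈ Tg, d χ * χ s)
              - ∑ χ ∈ Tg, (((c' χ).1 : ℝ) + ((c' χ).2 : ℝ) * Complex.I) * χ s)
          simpa using h0
      _ ≤ ‖f (s +ᵥ x) - ∑ χ ∈ Tg, d χ * χ s‖ + q/4 := by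
          have := hQQ' s
          linarith
  have hQ'cont : Continuous fun s : G =>
      ∑ χ ∈ Tg, (((c' χ).1 : ℝ) + ((c' χ).2 : ℝ) * Complex.I) * χ s :=
    continuous_finset_sum _ (fun χ hχ => continuous_const.mul (hTchar χ (hTgsub hχ)).1)
  have hfinal : limsup (fun n => avg μ B n (fun s => ‖f (s +ᵥ x)
      - ∑ χ ∈ Tg, (((c' χ).1 : ℝ) + ((c' χ).2 : ℝ) * Complex.I) * χ s‖)) atTop
      ≤ (9*q/80 + q/8) + q/4 := by
    apply real_limsup_le_of_pos (fun n => avg_nonneg (fun s => norm_nonneg _))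
    intro θ hθ
    have hEvW : ∀ᶠ n in atTop, avg μ B n
        (fun s => ‖f (s +ᵥ x) - ∑ χ ∈ Tg, d χ * χ s‖) < (9*q/80 + q/8) + θ := by
      apply eventually_le_of_limsup_le hwbnd (le_trans hlimsup_w hnum) hθ
    filter_upwards [hEvW] with n h1
    have hintq0 : IntegrableOn (fun s => ‖f (s +ᵥ x) - ∑ χ ∈ Tg, d χ * χ s‖) (B n) μ := by
      apply hB.integrableOn n (hfmQc.norm) (C + KP)
      intro s
      rw [norm_norm]
      exact hfmQb s
    have hintq : IntegrableOn (fun s => ‖f (s +ᵥ x) - ∑ χ ∈ Tg, d χ * χ s‖ + q/4) (B n) μ :=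
      hintq0.add (integrableOn_const (hB.meas_lt_top n).ne)
    have hintq2 : IntegrableOn (fun s => ‖f (s +ᵥ x)
        - ∑ χ ∈ Tg, (((c' χ).1 : ℝ) + ((c' χ).2 : ℝ) * Complex.I) * χ s‖) (B n) μ := by
      apply hB.integrableOn n ((hfxc.sub hQ'cont).norm) (C + (KP + q/4))
      intro s
      rw [norm_norm]
      calc ‖f (s +ᵥ x) - ∑ χ ∈ Tg, (((c' χ).1 : ℝ) + ((c' χ).2 : ℝ) * Complex.I) * χ s‖
          ≤ ‖f (s +ᵥ x) - ∑ χ ∈ Tg, d χ * χ s‖ + q/4 := hfinal_pt s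
        _ ≤ (C + KP) + q/4 := by
            have := hfmQb s
            linarith
        _ = C + (KP + q/4) := by ring
    calc avg μ B n (fun s => ‖f (s +ᵥ x)
        - ∑ χ ∈ Tg, (((c' χ).1 : ℝ) + ((c' χ).2 : ℝ) * Complex.I) * χ s‖)
        ≤ avg μ B n (fun s => ‖f (s +ᵥ x) - ∑ χ ∈ Tg, d χ * χ s‖ + q/4) :=
          avg_mono hB hintq2 hintq (fun s _ => hfinal_pt s)
      _ = avg μ B n (fun s => ‖f (s +ᵥ x) - ∑ χ ∈ Tg, d χ * χ s‖) + q/4 := by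
          rw [avg_add hintq0 (integrableOn_const (hB.meas_lt_top n).ne), avg_const hB]
      _ ≤ ((9*q/80 + q/8) + q/4) + θ := by linarith
  -- packaging
  refine ⟨Tg.card, fun j => ((Tg.equivFin.symm j : {χ // χ ∈ Tg}) : G → ℂ),
    fun j => c' ((Tg.equivFin.symm j : {χ // χ ∈ Tg}) : G → ℂ), ?_, ?_⟩
  · intro j
    exact hTgood _ (Tg.equivFin.symm j).2
  · have hsumeq : ∀ s : G, (∑ j : Fin Tg.card,
        ((((c' ((Tg.equivFin.symm j : {χ // χ ∈ Tg}) : G → ℂ)).1 : ℝ))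
          + (((c' ((Tg.equivFin.symm j : {χ // χ ∈ Tg}) : G → ℂ)).2 : ℝ)) * Complex.I)
            * ((Tg.equivFin.symm j : {χ // χ ∈ Tg}) : G → ℂ) s)
        = ∑ χ ∈ Tg, (((c' χ).1 : ℝ) + ((c' χ).2 : ℝ) * Complex.I) * χ s := by
      intro s
      rw [← Finset.sum_coe_sort Tg
        (fun χ => (((c' χ).1 : ℝ) + ((c' χ).2 : ℝ) * Complex.I) * χ s)]
      exact Equiv.sum_comp Tg.equivFin.symm
        (fun (v : {χ // χ ∈ Tg}) => (((c' (v : G → ℂ)).1 : ℝ)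
          + ((c' (v : G → ℂ)).2 : ℝ) * Complex.I) * (v : G → ℂ) s)
    have hgoal_eq : (fun s : G => ‖f (s +ᵥ x) - ∑ j : Fin Tg.card,
        ((((c' ((Tg.equivFin.symm j : {χ // χ ∈ Tg}) : G → ℂ)).1 : ℝ))
          + (((c' ((Tg.equivFin.symm j : {χ // χ ∈ Tg}) : G → ℂ)).2 : ℝ)) * Complex.I)
            * ((Tg.equivFin.symm j : {χ // χ ∈ Tg}) : G → ℂ) s‖)
        = fun s : G => ‖f (s +ᵥ x)
            - ∑ χ ∈ Tg, (((c' χ).1 : ℝ) + ((c' χ).2 : ℝ) * Complex.I) * χ s‖ := by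
      funext s
      rw [hsumeq s]
    calc upperMean μ B (fun s => ‖f (s +ᵥ x) - ∑ j : Fin Tg.card,
        ((((c' ((Tg.equivFin.symm j : {χ // χ ∈ Tg}) : G → ℂ)).1 : ℝ))
          + (((c' ((Tg.equivFin.symm j : {χ // χ ∈ Tg}) : G → ℂ)).2 : ℝ)) * Complex.I)
            * ((Tg.equivFin.symm j : {χ // χ ∈ Tg}) : G → ℂ) s‖)
        = upperMean μ B (fun s => ‖f (s +ᵥ x)
            - ∑ χ ∈ Tg, (((c' χ).1 : ℝ) + ((c' χ).2 : ℝ) * Complex.I) * χ s‖) := by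
          exact congrArg (upperMean μ B) hgoal_eq
      _ ≤ (9*q/80 + q/8) + q/4 := hfinal
      _ < q := by linarith


lemma besicovitch_of_dense_approx {D : Set C(X,ℂ)} (hB : IsFolner μ B) (hD : Dense D)
    (x : X)
    (h : ∀ f ∈ D, ∀ q : ℝ, 0 < q → ∃ (kk : ℕ) (σ : Fin kk → G → ℂ) (c : Fin kk → ℂ),
      (∀ j, IsChar (σ j)) ∧
      upperMean μ B (fun s => ‖f (s +ᵥ x) - ∑ j, c j * σ j s‖) < q) :
    BesicovitchAPPoint μ B x := by
  intro g ε hε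
  obtain ⟨f, hfD, hdist⟩ := hD.exists_dist_lt g (show (0:ℝ) < ε/3 by positivity)
  obtain ⟨kk, σ, c, hchar, herr⟩ := h f hfD (ε/3) (by positivity)
  refine ⟨kk, σ, c, hchar, ?_⟩
  set KK : ℝ := ∑ j, ‖c j‖ with hKK
  have hPc : Continuous fun s : G => ∑ j, c j * σ j s :=
    continuous_finset_sum _ (fun j _ => continuous_const.mul (hchar j).1)
  have hPb : ∀ s, ‖∑ j, c j * σ j s‖ ≤ KK := by
    intro s
    calc ‖∑ j, c j * σ j s‖ ≤ ∑ j, ‖c j * σ j s‖ := norm_sum_le _ _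
      _ = ∑ j, ‖c j‖ := by
          apply Finset.sum_congr rfl
          intro j _
          rw [norm_mul, (hchar j).2.1 s, mul_one]
  have hgc : Continuous fun s : G => g (s +ᵥ x) := continuous_orbit g x
  have hfc : Continuous fun s : G => f (s +ᵥ x) := continuous_orbit f x
  have hierr : ∀ n, IntegrableOn (fun s => ‖f (s +ᵥ x) - ∑ j, c j * σ j s‖) (B n) μ := by
    intro n
    apply hB.integrableOn n ((hfc.sub hPc).norm) (‖f‖ + KK)
    intro s
    rw [norm_norm]
    exact le_trans (norm_sub_le _ _) (add_le_add (f.norm_coe_le_norm _) (hPb s))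
  have hpt : ∀ s : G, ‖g (s +ᵥ x) - ∑ j, c j * σ j s‖
      ≤ ‖f (s +ᵥ x) - ∑ j, c j * σ j s‖ + ε/3 := by
    intro s
    calc ‖g (s +ᵥ x) - ∑ j, c j * σ j s‖
        ≤ ‖g (s +ᵥ x) - f (s +ᵥ x)‖ + ‖f (s +ᵥ x) - ∑ j, c j * σ j s‖ := by
          have h0 := norm_add_le (g (s +ᵥ x) - f (s +ᵥ x))
            (f (s +ᵥ x) - ∑ j, c j * σ j s)
          simpa using h0
      _ ≤ ε/3 + ‖f (s +ᵥ x) - ∑ j, c j * σ j s‖ := by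
          apply add_le_add_left
          calc ‖g (s +ᵥ x) - f (s +ᵥ x)‖ = dist (g (s +ᵥ x)) (f (s +ᵥ x)) :=
                (dist_eq_norm _ _).symm
            _ ≤ dist g f := ContinuousMap.dist_apply_le_dist _
            _ ≤ ε/3 := hdist.le
      _ = ‖f (s +ᵥ x) - ∑ j, c j * σ j s‖ + ε/3 := by ring
  have hbnd : ∀ n, avg μ B n (fun s => ‖f (s +ᵥ x) - ∑ j, c j * σ j s‖) ≤ ‖f‖ + KK := by
    intro n
    refine (abs_le.1 (abs_avg_le hB n (((hfc.sub hPc).norm).aestronglyMeasurable.restrict)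
      (fun s _ => ?_))).2
    rw [abs_of_nonneg (norm_nonneg _)]
    exact le_trans (norm_sub_le _ _) (add_le_add (f.norm_coe_le_norm _) (hPb s))
  have hkey : limsup (fun n => avg μ B n
      (fun s => ‖g (s +ᵥ x) - ∑ j, c j * σ j s‖)) atTop ≤ ε/3 + ε/3 := by
    apply real_limsup_le_of_pos (fun n => avg_nonneg (fun s => norm_nonneg _))
    intro θ hθ
    have hEv : ∀ᶠ n in atTop,
        avg μ B n (fun s => ‖f (s +ᵥ x) - ∑ j, c j * σ j s‖) < ε/3 + θ := by
      apply eventually_lt_of_limsup_lt _ (isBoundedUnder_of_le hbnd)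
      exact lt_of_lt_of_le herr (by linarith)
    filter_upwards [hEv] with n h1
    have hig : IntegrableOn (fun s => ‖f (s +ᵥ x) - ∑ j, c j * σ j s‖ + ε/3) (B n) μ :=
      (hierr n).add (integrableOn_const (hB.meas_lt_top n).ne)
    have hig2 : IntegrableOn (fun s => ‖g (s +ᵥ x) - ∑ j, c j * σ j s‖) (B n) μ := by
      apply hB.integrableOn n ((hgc.sub hPc).norm) (‖g‖ + KK)
      intro s
      rw [norm_norm]
      exact le_trans (norm_sub_le _ _) (add_le_add (g.norm_coe_le_norm _) (hPb s))
    calc avg μ B n (fun s => ‖g (s +ᵥ x) - ∑ j, c j * σ j s‖)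
        ≤ avg μ B n (fun s => ‖f (s +ᵥ x) - ∑ j, c j * σ j s‖ + ε/3) :=
          avg_mono hB hig2 hig (fun s _ => hpt s)
      _ = avg μ B n (fun s => ‖f (s +ᵥ x) - ∑ j, c j * σ j s‖) + ε/3 := by
          rw [avg_add (hierr n) (integrableOn_const (hB.meas_lt_top n).ne),
            avg_const hB]
      _ ≤ (ε/3 + θ) + ε/3 := by linarith
      _ = (ε/3 + ε/3) + θ := by ring
  calc upperMean μ B (fun s => ‖g (s +ᵥ x) - ∑ j, c j * σ j s‖) ≤ ε/3 + ε/3 := hkey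
    _ < ε := by linarith

lemma measurableSet_basic (hB : IsFolner μ B) (f : C(X,ℂ)) (kk : ℕ)
    (σ : Fin kk → G → ℂ) (hσ : ∀ j, IsChar (σ j)) (c : Fin kk → ℂ) (q : ℝ) :
    MeasurableSet {x : X |
      upperMean μ B (fun s => ‖f (s +ᵥ x) - ∑ j, c j * σ j s‖) < q} := by
  classical
  set KK : ℝ := ∑ j, ‖c j‖ with hKK
  have hPc : Continuous fun s : G => ∑ j, c j * σ j s :=
    continuous_finset_sum _ (fun j _ => continuous_const.mul (hσ j).1)
  have hPb : ∀ s, ‖∑ j, c j * σ j s‖ ≤ KK := by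
    intro s
    calc ‖∑ j, c j * σ j s‖ ≤ ∑ j, ‖c j * σ j s‖ := norm_sum_le _ _
      _ = ∑ j, ‖c j‖ := by
          apply Finset.sum_congr rfl
          intro j _
          rw [norm_mul, (hσ j).2.1 s, mul_one]
  have hcont : ∀ n, Continuous fun x : X =>
      avg μ B n (fun s => ‖f (s +ᵥ x) - ∑ j, c j * σ j s‖) := by
    intro n
    apply continuous_avg_param hB n (C := ‖f‖ + KK)
    · apply Continuous.norm
      apply Continuous.sub
      · exact f.continuous.comp (continuous_vadd.comp
          ((continuous_fst).prodMk continuous_snd))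
      · exact hPc.comp continuous_fst
    · intro s y
      rw [abs_of_nonneg (norm_nonneg _)]
      exact le_trans (norm_sub_le _ _) (add_le_add (f.norm_coe_le_norm _) (hPb s))
  have hbnd : ∀ x : X, ∀ n, avg μ B n
      (fun s => ‖f (s +ᵥ x) - ∑ j, c j * σ j s‖) ≤ ‖f‖ + KK := by
    intro x n
    refine (abs_le.1 (abs_avg_le hB n ((((continuous_orbit f x).sub hPc).norm
      ).aestronglyMeasurable.restrict) (fun s _ => ?_))).2
    rw [abs_of_nonneg (norm_nonneg _)]
    exact le_trans (norm_sub_le _ _) (add_le_add (f.norm_coe_le_norm _) (hPb s))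
  have heq : {x : X | upperMean μ B (fun s => ‖f (s +ᵥ x) - ∑ j, c j * σ j s‖) < q}
      = ⋃ (q' : ℚ) (_ : (q' : ℝ) < q) (N : ℕ), ⋂ (n : ℕ) (_ : N ≤ n),
          {x : X | avg μ B n (fun s => ‖f (s +ᵥ x) - ∑ j, c j * σ j s‖) ≤ (q' : ℝ)} := by
    ext x
    simp only [mem_setOf_eq, mem_iUnion, mem_iInter]
    constructor
    · intro hx
      obtain ⟨q', hq1, hq2⟩ := exists_rat_btwn hx
      refine ⟨q', hq2, ?_⟩
      have hEv := eventually_lt_of_limsup_lt hq1 (isBoundedUnder_of_le (hbnd x))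
      obtain ⟨N, hN⟩ := eventually_atTop.1 hEv
      exact ⟨N, fun n hn => (hN n hn).le⟩
    · rintro ⟨q', hq', N, hN⟩
      have : upperMean μ B (fun s => ‖f (s +ᵥ x) - ∑ j, c j * σ j s‖) ≤ (q' : ℝ) := by
        apply real_limsup_le_of_eventually
          (K := 0) (fun n => avg_nonneg (fun s => norm_nonneg _))
        exact eventually_atTop.2 ⟨N, hN⟩
      exact lt_of_le_of_lt this hq'
  rw [heq]
  refine MeasurableSet.iUnion fun q' => MeasurableSet.iUnion fun _ =>
    MeasurableSet.iUnion fun N => MeasurableSet.iInter fun n =>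
      MeasurableSet.iInter fun _ => ?_
  exact (isClosed_le (hcont n) continuous_const).measurableSet

lemma besicovitch_vadd (t : G) (x : X)
    (hx : BesicovitchAPPoint μ B x) : BesicovitchAPPoint μ B (t +ᵥ x) := by
  intro f
  have heq : (fun s : G => f (s +ᵥ (t +ᵥ x)))
      = fun s : G => (⟨fun y => f (t +ᵥ y),
          f.continuous.comp (continuous_const_vadd t)⟩ : C(X,ℂ)) (s +ᵥ x) := by
    funext s
    show f (s +ᵥ (t +ᵥ x)) = f (t +ᵥ (s +ᵥ x))
    rw [vadd_vadd, vadd_vadd, add_comm]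
  rw [heq]
  exact hx _

lemma isGeneric_vadd (hinv : InvariantMeasure G m) (t : G) (x : X)
    (hx : IsGeneric μ B m x) : IsGeneric μ B m (t +ᵥ x) := by
  intro f
  set g : C(X,ℂ) := ⟨fun y => f (t +ᵥ y), f.continuous.comp (continuous_const_vadd t)⟩
    with hg
  have heq : (fun n => avgC μ B n fun s => f (s +ᵥ (t +ᵥ x)))
      = fun n => avgC μ B n fun s => g (s +ᵥ x) := by
    funext n
    congr 1
    funext s
    show f (s +ᵥ (t +ᵥ x)) = f (t +ᵥ (s +ᵥ x))
    rw [vadd_vadd, vadd_vadd, add_comm]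
  rw [heq]
  have hint : (∫ z, g z ∂m) = ∫ z, f z ∂m := by
    have hemb : MeasurableEmbedding (fun y : X => t +ᵥ y) :=
      (Homeomorph.measurableEmbedding (Homeomorph.vadd (α := X) t))
    exact (hinv t).integral_comp hemb f
  rw [← hint]
  exact hx g

end MainEst2

/-- The set of Besicovitch almost periodic points which are generic for `m`
is measurable and invariant. -/
theorem statement_2
    {G : Type*} [AddCommGroup G] [TopologicalSpace G] [IsTopologicalAddGroup G] [T2Space G]
    [LocallyCompactSpace G] [SigmaCompactSpace G] [MeasurableSpace G] [BorelSpace G]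
    (μ : Measure G) [μ.IsAddHaarMeasure] (B : ℕ → Set G) (hB : IsFolner μ B)
    {X : Type*} [MetricSpace X] [CompactSpace X] [MeasurableSpace X] [BorelSpace X]
    [AddAction G X] [ContinuousVAdd G X]
    (m : Measure X) [IsProbabilityMeasure m] (hinv : InvariantMeasure G m) :
    MeasurableSet {x : X | BesicovitchAPPoint μ B x ∧ IsGeneric μ B m x} ∧
    ∀ t : G, (fun x : X => t +ᵥ x) ⁻¹' {x : X | BesicovitchAPPoint μ B x ∧ IsGeneric μ B m x}
      = {x : X | BesicovitchAPPoint μ B x ∧ IsGeneric μ B m x} := by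
  classical
  constructor
  · obtain ⟨D, hDc, hDd⟩ := TopologicalSpace.exists_countable_dense C(X,ℂ)
    set SS : Set (G → ℂ) := ⋃ f ∈ D, Sset (X := X) μ B m f with hSS
    have hSSc : SS.Countable := hDc.biUnion (fun f _ => Sset_countable hB f)
    haveI : Countable ↥SS := hSSc.to_subtype
    have hSSchar : ∀ χ : ↥SS, IsChar (χ : G → ℂ) := by
      rintro ⟨χ, hχ⟩
      simp only [hSS, mem_iUnion] at hχ
      obtain ⟨f, _, h1⟩ := hχ
      exact h1.1
    have heq : {x : X | BesicovitchAPPoint μ B x ∧ IsGeneric μ B m x}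
        = {x : X | IsGeneric μ B m x} ∩ ⋂ (f : C(X,ℂ)) (_ : f ∈ D) (q : ℚ) (_ : 0 < q),
            ⋃ (kk : ℕ) (σ : Fin kk → ↥SS) (c : Fin kk → ℚ × ℚ),
              {x : X | upperMean μ B (fun s => ‖f (s +ᵥ x)
                - ∑ j, (((c j).1 : ℝ) + ((c j).2 : ℝ) * Complex.I) * (σ j : G → ℂ) s‖)
                < (q : ℝ)} := by
      ext x
      simp only [mem_setOf_eq, mem_inter_iff, mem_iInter, mem_iUnion]
      constructor
      · rintro ⟨hbes, hgen⟩
        refine ⟨hgen, ?_⟩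
        intro f hfD q hq
        obtain ⟨kk, σ, c, hσS, herr⟩ := cleaning hB hgen f (hbes f) (q := (q:ℝ))
          (by exact_mod_cast hq)
        exact ⟨kk, fun j => ⟨σ j, mem_biUnion hfD (hσS j)⟩, c, herr⟩
      · rintro ⟨hgen, hap⟩
        refine ⟨?_, hgen⟩
        apply besicovitch_of_dense_approx hB hDd x
        intro f hfD q hq
        obtain ⟨q', hq1, hq2⟩ := exists_rat_btwn hq
        have hq'pos : 0 < q' := by exact_mod_cast hq1
        obtain ⟨kk, σ, c, herr⟩ := hap f hfD q' hq'pos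
        refine ⟨kk, fun j => (σ j : G → ℂ),
          fun j => (((c j).1 : ℝ) + ((c j).2 : ℝ) * Complex.I),
          fun j => hSSchar (σ j), ?_⟩
        exact lt_trans herr hq2
    rw [heq]
    apply (measurableSet_isGeneric hB).inter
    refine MeasurableSet.biInter hDc (fun f _ => ?_)
    refine MeasurableSet.iInter fun q => MeasurableSet.iInter fun _ => ?_
    refine MeasurableSet.iUnion fun kk => MeasurableSet.iUnion fun σ =>
      MeasurableSet.iUnion fun c => ?_
    exact measurableSet_basic hB f kk (fun j => (σ j : G → ℂ))
      (fun j => hSSchar (σ j)) _ _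
  · intro t
    ext x
    simp only [mem_preimage, mem_setOf_eq]
    constructor
    · rintro ⟨h1, h2⟩
      constructor
      · have := besicovitch_vadd (-t) (t +ᵥ x) h1
        rwa [vadd_vadd, neg_add_cancel, zero_vadd] at this
      · have := isGeneric_vadd hinv (-t) (t +ᵥ x) h2
        rwa [vadd_vadd, neg_add_cancel, zero_vadd] at this
    · rintro ⟨h1, h2⟩
      exact ⟨besicovitch_vadd t x h1, isGeneric_vadd hinv t x h2⟩


end APPaper
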